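/- arXiv:2502.14733 — 3 statements merged into one kernel-verified Lean document; each statement's English description precedes it below -/
import Mathlib

section
/- If C ⊆ ℝ² is a compact orthogonally connected set and K ⊆ int C is a convex body (compact convex set with nonempty interior), then C \ int K is orthogonally connected. -/
open Set MeasureTheory Bornology
open scoped ENNReal

noncomputable section

/-- `ℝ^d` as Euclidean space. -/
abbrev EucR (d : ℕ) := EuclideanSpace ℝ (Fin d)

/-- The segment from `x` to `y` is parallel to a coordinate axis
(all coordinates except possibly one agree). -/
def IsOrthSeg {d : ℕ} (x y : EucR d) : Prop :=
  ∃ i : Fin d, ∀ j, j ≠ i → x j = y j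

/-- `p 0, p 1, …, p n` is an orthogonal polygonal path contained in `S`. -/
def IsOrthPathIn {d : ℕ} (S : Set (EucR d)) (p : ℕ → EucR d) (n : ℕ) : Prop :=
  ∀ k, k < n → IsOrthSeg (p k) (p (k + 1)) ∧ segment ℝ (p k) (p (k + 1)) ⊆ S

/-- `S` is orthogonally connected. -/
def OrthConnected {d : ℕ} (S : Set (EucR d)) : Prop :=
  ∀ x ∈ S, ∀ y ∈ S, ∃ n : ℕ, ∃ p : ℕ → EucR d,
    p 0 = x ∧ p n = y ∧ IsOrthPathIn S p n

/-- An orthogonal path is a staircase if all edges parallel to the same axis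
point in the same direction. -/
def IsStaircaseIn {d : ℕ} (S : Set (EucR d)) (p : ℕ → EucR d) (n : ℕ) : Prop :=
  IsOrthPathIn S p n ∧
    ∀ k, k < n → ∀ l, l < n → ∀ i : Fin d,
      (∀ j, j ≠ i → p k j = p (k + 1) j) → (∀ j, j ≠ i → p l j = p (l + 1) j) →
        0 ≤ (p (k + 1) i - p k i) * (p (l + 1) i - p l i)

/-- `S` is staircase connected. -/
def StaircaseConnected {d : ℕ} (S : Set (EucR d)) : Prop :=
  ∀ x ∈ S, ∀ y ∈ S, ∃ n : ℕ, ∃ p : ℕ → EucR d,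
    p 0 = x ∧ p n = y ∧ IsStaircaseIn S p n

/-- `S` is orthogonally convex. -/
def OrthConvex {d : ℕ} (S : Set (EucR d)) : Prop :=
  ∀ x ∈ S, ∀ y ∈ S, IsOrthSeg x y → segment ℝ x y ⊆ S

/-- A convex body: compact convex with nonempty interior. -/
def IsConvexBody {d : ℕ} (K : Set (EucR d)) : Prop :=
  Convex ℝ K ∧ IsCompact K ∧ (interior K).Nonempty

/-- The point of `ℝ²` with coordinates `(a, b)`. -/
def pt2 (a b : ℝ) : EucR 2 := (WithLp.equiv 2 (Fin 2 → ℝ)).symm ![a, b]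

/-- Horizontal width of `S` at `x`: the length of the connected component
containing `x` of the intersection of `S` with the horizontal line through `x`. -/
def hw (S : Set (EucR 2)) (x : EucR 2) : ℝ≥0∞ :=
  volume (connectedComponentIn {t : ℝ | pt2 t (x 1) ∈ S} (x 0))

/-- Vertical width of `S` at `x`. -/
def vw (S : Set (EucR 2)) (x : EucR 2) : ℝ≥0∞ :=
  volume (connectedComponentIn {t : ℝ | pt2 (x 0) t ∈ S} (x 1))

/-- The set of unit directions from `x` towards points of `K`. -/
def dirSet (x : EucR 2) (K : Set (EucR 2)) : Set (EucR 2) :=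
  {u | ∃ y ∈ K, y ≠ x ∧ u = ‖y - x‖⁻¹ • (y - x)}

/-- `α_x(K)`: the angular (1-dimensional Hausdorff) measure of the set of unit
directions from `x` towards other points of `K`. -/
def angMeasure (x : EucR 2) (K : Set (EucR 2)) : ℝ≥0∞ :=
  μH[1] (dirSet x K)

/-- The half-line from `x` through `y`. -/
def rayFrom (x y : EucR 2) : Set (EucR 2) := {z | ∃ t : ℝ, 0 ≤ t ∧ z = x + t • (y - x)}

/-- `T_x(K)`: the union of the half-lines from `x` through the points of `K \ {x}`. -/
def TCone (x : EucR 2) (K : Set (EucR 2)) : Set (EucR 2) := ⋃ y ∈ K \ {x}, rayFrom x y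

/-- `K` is obtuse: at every boundary point `x`, either `α_x(K) > π/2`, or
`α_x(K) = π/2` and `T_x(K) \ {x}` is not open. -/
def Obtuse (K : Set (EucR 2)) : Prop :=
  ∀ x ∈ frontier K,
    ENNReal.ofReal (Real.pi / 2) < angMeasure x K ∨
      (angMeasure x K = ENNReal.ofReal (Real.pi / 2) ∧ ¬ IsOpen (TCone x K \ {x}))

/-- Inclusion of `ℝ² × ℝ` into `ℝ³`. -/
def incl3 (q : EucR 2) (t : ℝ) : EucR 3 := (WithLp.equiv 2 (Fin 3 → ℝ)).symm ![q 0, q 1, t]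

/-- A piece of a continuum `C`: the closure of a connected component of
`C \ {x}` for some cut point `x` of `C`. -/
def IsPiece (C P : Set (EucR 2)) : Prop :=
  ∃ x ∈ C, ¬ IsPreconnected (C \ {x}) ∧
    ∃ y ∈ C \ {x}, P = closure (connectedComponentIn (C \ {x}) y)

/-- `f` is unimodal on `[a,b]`: non-decreasing on `[a,c]`, non-increasing on `[c,b]`
for some `c ∈ (a,b)`. -/
def Unimodal (f : ℝ → ℝ) (a b : ℝ) : Prop :=
  ∃ c ∈ Ioo a b, MonotoneOn f (Icc a c) ∧ AntitoneOn f (Icc c b)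

/-- `a` is an s-extreme point of `M`: it belongs to a staircase in `M` only as an
endpoint. -/
def SExtreme (M : Set (EucR 2)) (a : EucR 2) : Prop :=
  a ∈ M ∧ ∀ n : ℕ, ∀ γ : ℕ → EucR 2, IsStaircaseIn M γ n →
    a ∈ ⋃ k ∈ Set.Iio n, segment ℝ (γ k) (γ (k + 1)) → a = γ 0 ∨ a = γ n

/-- `M ⊆ ℝ²` is a strip: the preimage of an interval of `ℝ` under a nonzero
linear functional (this includes half-planes and the whole plane). -/
def IsStrip (M : Set (EucR 2)) : Prop :=
  ∃ f : EucR 2 →ₗ[ℝ] ℝ, f ≠ 0 ∧ ∃ I : Set ℝ, I.OrdConnected ∧ M = f ⁻¹' I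

end
noncomputable section Aux
open Metric

lemma pt2_zero (a b : ℝ) : pt2 a b 0 = a := rfl
lemma pt2_one (a b : ℝ) : pt2 a b 1 = b := rfl
lemma pt2_coords (z : EucR 2) : pt2 (z 0) (z 1) = z := by
  ext i; fin_cases i <;> rfl
lemma pt2_dist (a b a' b' : ℝ) :
    dist (pt2 a b) (pt2 a' b') = Real.sqrt ((a - a')^2 + (b - b')^2) := by
  rw [EuclideanSpace.dist_eq]; congr 1; rw [Fin.sum_univ_two]
  simp only [pt2_zero, pt2_one, Real.dist_eq, sq_abs]

lemma pt2_combo (lam mu x₁ y₁ x₂ y₂ : ℝ) :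
    lam • pt2 x₁ y₁ + mu • pt2 x₂ y₂ = pt2 (lam*x₁+mu*x₂) (lam*y₁+mu*y₂) := by
  ext i
  fin_cases i <;> simp [pt2, PiLp.add_apply, PiLp.smul_apply, smul_eq_mul]

lemma pt2_dist_le (a b a' b' : ℝ) :
    dist (pt2 a b) (pt2 a' b') ≤ |a - a'| + |b - b'| := by
  calc dist (pt2 a b) (pt2 a' b') ≤ dist (pt2 a b) (pt2 a' b) + dist (pt2 a' b) (pt2 a' b') :=
        dist_triangle _ _ _
    _ = |a - a'| + |b - b'| := by
        rw [pt2_dist, pt2_dist]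
        norm_num [Real.sqrt_sq_eq_abs]

lemma abs_coord_le_norm (z : EucR 2) (i : Fin 2) : |z i| ≤ ‖z‖ := by
  rw [EuclideanSpace.norm_eq z, ← Real.sqrt_sq_eq_abs]
  apply Real.sqrt_le_sqrt
  calc (z i)^2 ≤ ∑ j, (z j)^2 :=
        Finset.single_le_sum (f := fun j => (z j)^2) (fun j _ => sq_nonneg _) (Finset.mem_univ i)
    _ = ∑ j, ‖z j‖^2 := by simp [Real.norm_eq_abs, sq_abs]


lemma pt2_as_smul (x y : ℝ) : pt2 x y = x • pt2 1 0 + y • pt2 0 1 := by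
  rw [pt2_combo]; norm_num

lemma continuous_pt2_left (y : ℝ) : Continuous fun x : ℝ => pt2 x y := by
  have : (fun x : ℝ => pt2 x y) = fun x : ℝ => x • pt2 1 0 + y • pt2 0 1 := by
    funext x; rw [pt2_as_smul]
  rw [this]
  exact (continuous_id.smul continuous_const).add continuous_const

lemma continuous_pt2_right (x : ℝ) : Continuous fun y : ℝ => pt2 x y := by
  have : (fun y : ℝ => pt2 x y) = fun y : ℝ => x • pt2 1 0 + y • pt2 0 1 := by
    funext y; rw [pt2_as_smul]
  rw [this]
  exact continuous_const.add (continuous_id.smul continuous_const)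

section Slices
variable {K : Set (EucR 2)}

def sliceK (K : Set (EucR 2)) (y : ℝ) : Set ℝ := {x | pt2 x y ∈ K}
def projK (K : Set (EucR 2)) : Set ℝ := (fun z : EucR 2 => z 1) '' K
def aK (K : Set (EucR 2)) (y : ℝ) : ℝ := sInf (sliceK K y)
def bK (K : Set (EucR 2)) (y : ℝ) : ℝ := sSup (sliceK K y)
def cK (K : Set (EucR 2)) : ℝ := sInf (projK K)
def dK (K : Set (EucR 2)) : ℝ := sSup (projK K)

lemma exists_bound (hKcomp : IsCompact K) : ∃ R : ℝ, ∀ z ∈ K, |z 0| ≤ R ∧ |z 1| ≤ R := by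
  obtain ⟨r, hr⟩ := hKcomp.isBounded.subset_closedBall 0
  exact ⟨r, fun z hz => ⟨le_trans (abs_coord_le_norm z 0) (by simpa using hr hz),
    le_trans (abs_coord_le_norm z 1) (by simpa using hr hz)⟩⟩

lemma sliceK_convex (hKconv : Convex ℝ K) (y : ℝ) : Convex ℝ (sliceK K y) := by
  intro x₁ h₁ x₂ h₂ lam mu hl hm hs
  have h3 := hKconv h₁ h₂ hl hm hs
  rw [pt2_combo] at h3
  have hy : lam * y + mu * y = y := by rw [← add_mul, hs, one_mul]
  rw [hy] at h3
  exact h3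

lemma sliceK_closed (hKcomp : IsCompact K) (y : ℝ) : IsClosed (sliceK K y) :=
  IsClosed.preimage (continuous_pt2_left y) hKcomp.isClosed

lemma sliceK_compact (hKcomp : IsCompact K) (y : ℝ) : IsCompact (sliceK K y) := by
  obtain ⟨R, hR⟩ := exists_bound hKcomp
  apply IsCompact.of_isClosed_subset (isCompact_Icc (a := -R) (b := R)) (sliceK_closed hKcomp y)
  intro x hx
  have h := (hR _ hx).1
  rw [pt2_zero] at h
  exact abs_le.mp h

lemma aK_mem (hKcomp : IsCompact K) {y : ℝ} (hne : (sliceK K y).Nonempty) :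
    aK K y ∈ sliceK K y :=
  (sliceK_compact hKcomp y).sInf_mem hne

lemma bK_mem (hKcomp : IsCompact K) {y : ℝ} (hne : (sliceK K y).Nonempty) :
    bK K y ∈ sliceK K y :=
  (sliceK_compact hKcomp y).sSup_mem hne

lemma aK_le (hKcomp : IsCompact K) {y x : ℝ} (hx : x ∈ sliceK K y) : aK K y ≤ x :=
  csInf_le (sliceK_compact hKcomp y).bddBelow hx

lemma le_bK (hKcomp : IsCompact K) {y x : ℝ} (hx : x ∈ sliceK K y) : x ≤ bK K y :=
  le_csSup (sliceK_compact hKcomp y).bddAbove hx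

lemma mem_slice_of_between (hKconv : Convex ℝ K) {y x₁ x₂ t : ℝ} (h₁ : x₁ ∈ sliceK K y)
    (h₂ : x₂ ∈ sliceK K y) (ht₁ : x₁ ≤ t) (ht₂ : t ≤ x₂) : t ∈ sliceK K y :=
  ((sliceK_convex hKconv y).ordConnected).out h₁ h₂ ⟨ht₁, ht₂⟩

lemma projK_compact (hKcomp : IsCompact K) : IsCompact (projK K) :=
  hKcomp.image (EuclideanSpace.proj (1 : Fin 2)).continuous

lemma projK_convex (hKconv : Convex ℝ K) : Convex ℝ (projK K) := by
  rintro - ⟨z₁, hz₁, rfl⟩ - ⟨z₂, hz₂, rfl⟩ lam mu hl hm hs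
  exact ⟨lam • z₁ + mu • z₂, hKconv hz₁ hz₂ hl hm hs, rfl⟩

lemma mem_projK {z : EucR 2} (hz : z ∈ K) : z 1 ∈ projK K := ⟨z, hz, rfl⟩

lemma cK_le (hKcomp : IsCompact K) {z : EucR 2} (hz : z ∈ K) : cK K ≤ z 1 :=
  csInf_le (projK_compact hKcomp).bddBelow (mem_projK hz)

lemma le_dK (hKcomp : IsCompact K) {z : EucR 2} (hz : z ∈ K) : z 1 ≤ dK K :=
  le_csSup (projK_compact hKcomp).bddAbove (mem_projK hz)

lemma sliceK_nonempty (hKconv : Convex ℝ K) (hKcomp : IsCompact K) (hKne : K.Nonempty)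
    {y : ℝ} (hy₁ : cK K ≤ y) (hy₂ : y ≤ dK K) : (sliceK K y).Nonempty := by
  have hpne : (projK K).Nonempty := hKne.image _
  have hc : cK K ∈ projK K := (projK_compact hKcomp).sInf_mem hpne
  have hd : dK K ∈ projK K := (projK_compact hKcomp).sSup_mem hpne
  have hy : y ∈ projK K := ((projK_convex hKconv).ordConnected).out hc hd ⟨hy₁, hy₂⟩
  obtain ⟨z, hz, hz1⟩ := hy
  exact ⟨z 0, by rw [sliceK]; simp only [mem_setOf_eq]; rw [← hz1, pt2_coords]; exact hz⟩

end Slices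

section Interior
variable {K : Set (EucR 2)}

lemma interior_easy (hKcomp : IsCompact K) {z : EucR 2} (hz : z ∈ interior K) :
    aK K (z 1) < z 0 ∧ z 0 < bK K (z 1) ∧ cK K < z 1 ∧ z 1 < dK K := by
  rw [mem_interior_iff_mem_nhds, Metric.mem_nhds_iff] at hz
  obtain ⟨ε, hε, hball⟩ := hz
  have hdist : ∀ s t : ℝ, dist (pt2 s t) z = Real.sqrt ((s - z 0)^2 + (t - z 1)^2) := by
    intro s t; conv_lhs => rw [← pt2_coords z]
    exact pt2_dist _ _ _ _
  have key : ∀ s t : ℝ, (s - z 0)^2 + (t - z 1)^2 < ε^2 → pt2 s t ∈ K := by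
    intro s t h
    apply hball
    rw [mem_ball, hdist]
    calc Real.sqrt ((s - z 0)^2 + (t - z 1)^2) < Real.sqrt (ε^2) := by
          apply Real.sqrt_lt_sqrt (by positivity) h
      _ = ε := Real.sqrt_sq hε.le
  have h2 : (ε/2)^2 < ε^2 := by nlinarith
  have hl : pt2 (z 0 - ε/2) (z 1) ∈ K := key _ _ (by ring_nf; nlinarith)
  have hr : pt2 (z 0 + ε/2) (z 1) ∈ K := key _ _ (by ring_nf; nlinarith)
  have hd : pt2 (z 0) (z 1 - ε/2) ∈ K := key _ _ (by ring_nf; nlinarith)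
  have hu : pt2 (z 0) (z 1 + ε/2) ∈ K := key _ _ (by ring_nf; nlinarith)
  refine ⟨lt_of_le_of_lt (aK_le hKcomp hl) (by linarith),
    lt_of_lt_of_le (by linarith) (le_bK hKcomp hr),
    lt_of_le_of_lt (cK_le hKcomp hd) (by simp [pt2_one]; linarith),
    lt_of_lt_of_le (by simp [pt2_one]; linarith) (le_dK hKcomp hu)⟩

lemma subset_closure_interior (hKconv : Convex ℝ K) (hKne : (interior K).Nonempty) :
    K ⊆ closure (interior K) := by
  obtain ⟨w₀, hw₀⟩ := hKne
  intro w hw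
  have key : ∀ t : ℝ, 0 < t → t ≤ 1 → (1 - t) • w + t • w₀ ∈ interior K := fun t ht ht1 =>
    hKconv.combo_self_interior_mem_interior hw hw₀ (by linarith) ht (by ring)
  rw [mem_closure_iff_seq_limit]
  refine ⟨fun n => (1 - (1:ℝ)/(n+1)) • w + ((1:ℝ)/(n+1)) • w₀, fun n => key _ (by positivity) (by
    rw [div_le_one (by positivity)]; linarith [Nat.cast_nonneg (α := ℝ) n]), ?_⟩
  have h1 : Filter.Tendsto (fun n : ℕ => (1:ℝ)/(n+1)) Filter.atTop (nhds 0) :=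
    tendsto_one_div_add_atTop_nhds_zero_nat
  simpa using ((h1.const_sub 1).smul_const w).add (h1.smul_const w₀)

lemma interior_hard (hKconv : Convex ℝ K) (hKcomp : IsCompact K)
    (hKne : (interior K).Nonempty) {x y : ℝ} (hy₁ : cK K < y) (hy₂ : y < dK K)
    (hx₁ : aK K y < x) (hx₂ : x < bK K y) : pt2 x y ∈ interior K := by
  by_contra hz
  obtain ⟨f, hf⟩ := geometric_hahn_banach_open_point (hKconv.interior) isOpen_interior hz
  set z := pt2 x y with hzdef
  have hKf : ∀ w ∈ K, f w ≤ f z := by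
    intro w hw
    have h2 : closure (interior K) ⊆ {w | f w ≤ f z} :=
      closure_minimal (fun w' hw' => le_of_lt (hf w' hw'))
        (isClosed_le f.continuous continuous_const)
    exact h2 (subset_closure_interior hKconv hKne hw)
  set α := f (pt2 1 0) with hα
  set β := f (pt2 0 1) with hβ
  have hdecomp : ∀ s t : ℝ, f (pt2 s t) = f z + (s - x) * α + (t - y) * β := by
    intro s t
    have : pt2 s t = pt2 x y + (s - x) • pt2 1 0 + (t - y) • pt2 0 1 := by
      rw [pt2_as_smul x y, pt2_as_smul s t]
      module
    rw [this]
    simp only [map_add, _root_.map_smul, smul_eq_mul, hzdef]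
    try ring
  have hKne' : K.Nonempty := ⟨_, interior_subset hKne.some_mem⟩
  have hsl : (sliceK K y).Nonempty := sliceK_nonempty hKconv hKcomp hKne' hy₁.le hy₂.le
  -- α = 0
  have hamem := aK_mem hKcomp hsl
  have hbmem := bK_mem hKcomp hsl
  have h1 : (aK K y - x) * α ≤ 0 := by
    have := hKf _ hamem
    rw [hdecomp] at this; linarith
  have h2 : (bK K y - x) * α ≤ 0 := by
    have := hKf _ hbmem
    rw [hdecomp] at this; linarith
  have hα0 : α = 0 := by nlinarith
  -- β = 0
  have hpne : (projK K).Nonempty := hKne'.image _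
  obtain ⟨zc, hzc, hzc1⟩ := (projK_compact hKcomp).sInf_mem hpne
  obtain ⟨zd, hzd, hzd1⟩ := (projK_compact hKcomp).sSup_mem hpne
  have h3 : (cK K - y) * β ≤ 0 := by
    have h4 := hKf _ hzc
    rw [← pt2_coords zc, hdecomp] at h4
    have hc' : zc 1 = cK K := hzc1
    rw [hα0, hc'] at h4
    linarith
  have h4 : (dK K - y) * β ≤ 0 := by
    have h5 := hKf _ hzd
    rw [← pt2_coords zd, hdecomp] at h5
    have hd' : zd 1 = dK K := hzd1
    rw [hα0, hd'] at h5
    linarith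
  have hβ0 : β = 0 := by nlinarith
  -- contradiction
  obtain ⟨w₀, hw₀⟩ := hKne
  have h6 := hf w₀ hw₀
  have h7 : f w₀ = f z := by
    rw [← pt2_coords w₀, hdecomp, hα0, hβ0]; ring
  linarith

lemma frontier_classify (hKconv : Convex ℝ K) (hKcomp : IsCompact K)
    (hKne : (interior K).Nonempty) {e : EucR 2} (he : e ∈ frontier K) :
    (e 0 = aK K (e 1) ∨ e 0 = bK K (e 1) ∨ e 1 = cK K ∨ e 1 = dK K) := by
  have heK : e ∈ K := by
    rw [IsClosed.frontier_eq hKcomp.isClosed] at he; exact he.1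
  have heI : e ∉ interior K := by
    rw [IsClosed.frontier_eq hKcomp.isClosed] at he; exact he.2
  have hsl : e 0 ∈ sliceK K (e 1) := by
    rw [sliceK]; simp only [mem_setOf_eq, pt2_coords]; exact heK
  have h1 := aK_le hKcomp hsl
  have h2 := le_bK hKcomp hsl
  have h3 := cK_le hKcomp heK
  have h4 := le_dK hKcomp heK
  by_contra hcon
  push_neg at hcon
  obtain ⟨hc1, hc2, hc3, hc4⟩ := hcon
  have := interior_hard hKconv hKcomp hKne (lt_of_le_of_ne h3 (Ne.symm hc3))
    (lt_of_le_of_ne h4 hc4) (lt_of_le_of_ne h1 (Ne.symm hc1)) (lt_of_le_of_ne h2 hc2)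
  rw [pt2_coords] at this
  exact heI this
end Interior

lemma mem_horiz_seg {x₁ x₂ y : ℝ} {z : EucR 2} (hz : z ∈ segment ℝ (pt2 x₁ y) (pt2 x₂ y)) :
    ∃ t ∈ segment ℝ x₁ x₂, z = pt2 t y := by
  rw [segment_eq_image'] at hz ⊢
  obtain ⟨θ, hθ, rfl⟩ := hz
  refine ⟨x₁ + θ * (x₂ - x₁), ⟨θ, hθ, rfl⟩, ?_⟩
  ext i
  fin_cases i <;>
    simp [pt2, PiLp.add_apply, PiLp.smul_apply, smul_eq_mul] <;> ring

lemma mem_vert_seg {y₁ y₂ x : ℝ} {z : EucR 2} (hz : z ∈ segment ℝ (pt2 x y₁) (pt2 x y₂)) :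
    ∃ t ∈ segment ℝ y₁ y₂, z = pt2 x t := by
  rw [segment_eq_image'] at hz ⊢
  obtain ⟨θ, hθ, rfl⟩ := hz
  refine ⟨y₁ + θ * (y₂ - y₁), ⟨θ, hθ, rfl⟩, ?_⟩
  ext i
  fin_cases i <;>
    simp [pt2, PiLp.add_apply, PiLp.smul_apply, smul_eq_mul] <;> ring

lemma horiz_orth (x₁ x₂ y : ℝ) : IsOrthSeg (pt2 x₁ y) (pt2 x₂ y) := by
  refine ⟨0, fun j hj => ?_⟩
  fin_cases j
  · exact absurd rfl hj
  · rfl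

lemma vert_orth (x y₁ y₂ : ℝ) : IsOrthSeg (pt2 x y₁) (pt2 x y₂) := by
  refine ⟨1, fun j hj => ?_⟩
  fin_cases j
  · rfl
  · exact absurd rfl hj

lemma isOrthSeg_symm {d} {x y : EucR d} (h : IsOrthSeg x y) : IsOrthSeg y x := by
  obtain ⟨i, hi⟩ := h; exact ⟨i, fun j hj => (hi j hj).symm⟩

lemma mem_real_segment {a b t : ℝ} (ht : t ∈ segment ℝ a b) : min a b ≤ t ∧ t ≤ max a b := by
  rw [segment_eq_uIcc] at ht
  exact ⟨ht.1, ht.2⟩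

def pappend {d} (p q : ℕ → EucR d) (m : ℕ) : ℕ → EucR d :=
  fun k => if k ≤ m then p k else q (k - m)

lemma pappend_zero {d} (p q : ℕ → EucR d) (m : ℕ) : pappend p q m 0 = p 0 := by
  simp [pappend]

lemma pappend_last {d} (p q : ℕ → EucR d) (m n : ℕ) (h : p m = q 0) :
    pappend p q m (m + n) = q n := by
  rcases Nat.eq_zero_or_pos n with rfl | hn
  · simp [pappend, h]
  · have : ¬ (m + n ≤ m) := by omega
    simp [pappend, this]

lemma IsOrthPathIn.mono {d} {S S' : Set (EucR d)} {p n} (h : IsOrthPathIn S p n)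
    (hss : S ⊆ S') : IsOrthPathIn S' p n :=
  fun k hk => ⟨(h k hk).1, ((h k hk).2).trans hss⟩

lemma isOrthPathIn_append {d} {S : Set (EucR d)} {p q m n} (hp : IsOrthPathIn S p m)
    (hq : IsOrthPathIn S q n) (hpq : p m = q 0) :
    IsOrthPathIn S (pappend p q m) (m + n) := by
  intro k hk
  rcases lt_trichotomy k m with h | rfl | h
  · have h1 : k ≤ m := by omega
    have h2 : k + 1 ≤ m := by omega
    simpa [pappend, h1, h2] using hp k h
  · have hn : 0 < n := by omega
    have h2 : ¬ (k + 1 ≤ k) := by omega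
    have h3 : k + 1 - k = 1 := by omega
    simpa [pappend, h2, h3, hpq] using hq 0 hn
  · have h1 : ¬ (k ≤ m) := by omega
    have h2 : ¬ (k + 1 ≤ m) := by omega
    have h3 : k + 1 - m = (k - m) + 1 := by omega
    have h4 : k - m < n := by omega
    simpa [pappend, h1, h2, h3] using hq (k - m) h4
  
def prev' {d} (p : ℕ → EucR d) (n : ℕ) : ℕ → EucR d := fun k => p (n - k)

lemma isOrthPathIn_reverse {d} {S : Set (EucR d)} {p n} (hp : IsOrthPathIn S p n) :
    IsOrthPathIn S (prev' p n) n := by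
  intro k hk
  have h1 : n - k = (n - (k+1)) + 1 := by omega
  have h2 := hp (n - (k+1)) (by omega)
  constructor
  · rw [prev', prev', h1]
    exact isOrthSeg_symm h2.1
  · rw [prev', prev', h1, segment_symm]
    exact h2.2

lemma prev'_zero {d} (p : ℕ → EucR d) (n : ℕ) : prev' p n 0 = p n := by simp [prev']
lemma prev'_last {d} (p : ℕ → EucR d) (n : ℕ) : prev' p n n = p 0 := by simp [prev']

def psingle {d} (x y : EucR d) : ℕ → EucR d := fun k => if k = 0 then x else y

lemma isOrthPathIn_single {d} {S : Set (EucR d)} {x y : EucR d} (h1 : IsOrthSeg x y)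
    (h2 : segment ℝ x y ⊆ S) : IsOrthPathIn S (psingle x y) 1 := by
  intro k hk
  have : k = 0 := by omega
  subst this
  simpa [psingle] using ⟨h1, h2⟩
section Climb
variable {K : Set (EucR 2)}

lemma chord_sweep (hKconv : Convex ℝ K) {p₁ q₁ p₂ q₂ : ℝ} (h₁ : pt2 p₁ q₁ ∈ K)
    (h₂ : pt2 p₂ q₂ ∈ K) {τ : ℝ} (hτ₁ : min p₁ p₂ ≤ τ) (hτ₂ : τ ≤ max p₁ p₂) :
    ∃ q : ℝ, min q₁ q₂ ≤ q ∧ q ≤ max q₁ q₂ ∧ pt2 τ q ∈ K := by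
  have hseg : τ ∈ segment ℝ p₁ p₂ := by
    rw [segment_eq_uIcc]; exact ⟨hτ₁, hτ₂⟩
  obtain ⟨lam, mu, hl, hm, hs, ht⟩ := hseg
  refine ⟨lam * q₁ + mu * q₂, ?_, ?_, ?_⟩
  · have : lam * q₁ + mu * q₂ ∈ segment ℝ q₁ q₂ := ⟨lam, mu, hl, hm, hs, rfl⟩
    rw [segment_eq_uIcc] at this; exact this.1
  · have : lam * q₁ + mu * q₂ ∈ segment ℝ q₁ q₂ := ⟨lam, mu, hl, hm, hs, rfl⟩
    rw [segment_eq_uIcc] at this; exact this.2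
  · have hcombo := hKconv h₁ h₂ hl hm hs
    rw [pt2_combo] at hcombo
    have : lam * p₁ + mu * p₂ = τ := by rw [← ht]; simp [smul_eq_mul]
    rwa [this] at hcombo

lemma sigma_bounds {σ t A B : ℝ} (hσ : σ = 1 ∨ σ = -1) (hAB : B ≤ A)
    (hmin : min (σ * A) (σ * B) ≤ t) (hmax : t ≤ max (σ * A) (σ * B)) :
    B ≤ σ * t ∧ σ * t ≤ A := by
  rcases hσ with rfl | rfl
  · simp only [one_mul] at *
    rw [min_eq_right hAB, max_eq_left hAB] at *
    exact ⟨hmin, hmax⟩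
  · have h1 : -A ≤ -B := by linarith
    simp only [neg_one_mul] at *
    rw [min_eq_left h1, max_eq_right h1] at *
    constructor <;> linarith

lemma sigma_bounds' {σ s A B : ℝ} (hσ : σ = 1 ∨ σ = -1) (h1 : min A B ≤ s) (h2 : s ≤ max A B) :
    min (σ*A) (σ*B) ≤ σ*s ∧ σ*s ≤ max (σ*A) (σ*B) := by
  rcases hσ with rfl | rfl
  · simp only [one_mul]; exact ⟨h1, h2⟩
  · simp only [neg_one_mul, min_neg_neg, max_neg_neg]
    constructor <;> linarith

lemma sigma_abs {σ a b : ℝ} (hσ : σ = 1 ∨ σ = -1) : |σ*a - σ*b| = |a - b| := by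
  rcases hσ with rfl | rfl
  · simp
  · rw [show -1*a - -1*b = -(a-b) by ring, abs_neg]

lemma climb (hKconv : Convex ℝ K) (S : Set (EucR 2)) (σ : ℝ) (hσ : σ = 1 ∨ σ = -1)
    (g : ℝ → ℝ) (u v : ℝ) (huv : u ≤ v) (ε : ℝ) (hε : 0 < ε)
    (hrail : ∀ y ∈ Icc u v, pt2 (σ * g y) y ∈ K)
    (hgbdd : ∃ R : ℝ, ∀ y ∈ Icc u v, -R ≤ g y)
    (hS : ∀ z : EucR 2, z 1 ∈ Icc u v → (∃ w ∈ K, dist z w ≤ ε) → σ * z 0 ≤ g (z 1) → z ∈ S) :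
    ∃ n p, p 0 = pt2 (σ * g u) u ∧ p n = pt2 (σ * g v) v ∧ IsOrthPathIn S p n := by
  have hσ2 : σ * σ = 1 := by rcases hσ with rfl | rfl <;> norm_num
  rcases eq_or_lt_of_le huv with rfl | huv'
  · exact ⟨0, fun _ => pt2 (σ * g u) u, rfl, rfl, fun k hk => absurd hk (by omega)⟩
  obtain ⟨m₀, hm₀⟩ := exists_nat_ge ((v - u) / (ε/2))
  set m := m₀ + 1 with hm
  have hmpos : 0 < m := by omega
  set h : ℝ := (v - u) / m with hh
  have hmR : (0:ℝ) < m := by exact_mod_cast hmpos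
  have hhpos : 0 < h := div_pos (by linarith) hmR
  have hhε : h ≤ ε / 2 := by
    rw [hh, div_le_iff₀ (by positivity)]
    have h1 : (v - u) / (ε/2) ≤ m := by
      calc (v - u) / (ε/2) ≤ m₀ := hm₀
        _ ≤ m := by exact_mod_cast Nat.le_succ m₀
    calc v - u = ((v-u)/(ε/2)) * (ε/2) := by field_simp
      _ ≤ m * (ε/2) := by
          apply mul_le_mul_of_nonneg_right h1 (by positivity)
      _ = ε / 2 * m := by ring
  set Y : ℕ → ℝ := fun j => u + j * h with hY
  have hY0 : Y 0 = u := by simp [hY]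
  have hYm : Y m = v := by
    rw [hY]; simp only [hh]
    field_simp
    ring
  have hYmono : ∀ j, Y j ≤ Y (j+1) := by
    intro j; rw [hY]; simp only
    push_cast; nlinarith
  have hYstep : ∀ j, Y (j+1) - Y j = h := by
    intro j; rw [hY]; simp only; push_cast; ring
  have hYmem : ∀ j ≤ m, Y j ∈ Icc u v := by
    intro j hj
    constructor
    · rw [hY]; simp only
      have : (0:ℝ) ≤ j * h := by positivity
      linarith
    · rw [← hYm, hY]; simp only
      have : (j:ℝ) ≤ m := by exact_mod_cast hj
      nlinarith
  -- the inf of g over each subinterval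
  obtain ⟨R, hR⟩ := hgbdd
  have hbdd : ∀ j, j < m → BddBelow (g '' Icc (Y j) (Y (j+1))) := by
    intro j hj
    refine ⟨-R, fun x hx => ?_⟩
    obtain ⟨t, ht, rfl⟩ := hx
    exact hR t ⟨le_trans (hYmem j (by omega)).1 ht.1, le_trans ht.2 (hYmem (j+1) (by omega)).2⟩
  have hne' : ∀ j, (g '' Icc (Y j) (Y (j+1))).Nonempty := fun j =>
    ⟨g (Y j), mem_image_of_mem g ⟨le_refl _, hYmono j⟩⟩
  set M : ℕ → ℝ := fun j => sInf (g '' Icc (Y j) (Y (j+1))) with hM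
  have hMle : ∀ j, j < m → ∀ t ∈ Icc (Y j) (Y (j+1)), M j ≤ g t := by
    intro j hj t ht
    exact csInf_le (hbdd j hj) (mem_image_of_mem g ht)
  have hMapprox : ∀ j, j < m → ∃ t ∈ Icc (Y j) (Y (j+1)), g t < M j + ε/2 := by
    intro j hj
    obtain ⟨x, hx, hlt⟩ := Real.lt_sInf_add_pos (hne' j) (show (0:ℝ) < ε/2 by positivity)
    obtain ⟨t, ht, rfl⟩ := hx
    exact ⟨t, ht, hlt⟩
  -- subinterval facts
  have hsub : ∀ j, j < m → Icc (Y j) (Y (j+1)) ⊆ Icc u v := by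
    intro j hj t ht
    exact ⟨le_trans (hYmem j (by omega)).1 ht.1, le_trans ht.2 (hYmem (j+1) (by omega)).2⟩
  -- horizontal claim
  have claimH : ∀ j, j < m → ∀ yy ∈ Icc (Y j) (Y (j+1)),
      segment ℝ (pt2 (σ * g yy) yy) (pt2 (σ * M j) yy) ⊆ S := by
    intro j hj yy hyy z hz
    obtain ⟨t, ht, rfl⟩ := mem_horiz_seg hz
    have hyyuv : yy ∈ Icc u v := hsub j hj hyy
    have hMgyy : M j ≤ g yy := hMle j hj yy hyy
    obtain ⟨hmin, hmax⟩ := mem_real_segment ht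
    -- s := σ * t satisfies M j ≤ s ≤ g yy
    set s := σ * t with hs
    have hts : t = σ * s := by rw [hs, ← mul_assoc, hσ2, one_mul]
    obtain ⟨hs1, hs2⟩ := sigma_bounds hσ hMgyy hmin hmax
    obtain ⟨ys, hys, hgys⟩ := hMapprox j hj
    have hysuv : ys ∈ Icc u v := hsub j hj hys
    have hwidth : |yy - ys| ≤ ε/2 := by
      rw [abs_le]
      have h1 := hYstep j
      constructor <;> linarith [hyy.1, hyy.2, hys.1, hys.2, hhε]
    apply hS
    · rw [pt2_one]; exact hyyuv
    · -- distance witness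
      by_cases hcase : min (g ys) (g yy) ≤ s
      · -- chord sweep between rail points
        have hsmax : s ≤ max (g ys) (g yy) := le_trans hs2 (le_max_right _ _)
        have hτ1 := sigma_bounds' hσ hcase hsmax
        rw [← hts] at hτ1
        obtain ⟨q, hq1, hq2, hqK⟩ := chord_sweep hKconv (hrail ys hysuv) (hrail yy hyyuv)
          hτ1.1 hτ1.2
        refine ⟨pt2 t q, hqK, ?_⟩
        calc dist (pt2 t yy) (pt2 t q) ≤ |t - t| + |yy - q| := pt2_dist_le _ _ _ _
          _ = |yy - q| := by simp
          _ ≤ ε := by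
              have hqJ : Y j ≤ q ∧ q ≤ Y (j+1) :=
                ⟨le_trans (le_min hys.1 hyy.1) hq1, le_trans hq2 (max_le hys.2 hyy.2)⟩
              rw [abs_le]
              have h1 := hYstep j
              constructor <;> linarith [hyy.1, hyy.2, hqJ.1, hqJ.2, hhε, hε]
      · -- s is within ε/2 of g ys
        push_neg at hcase
        have hsys : |s - g ys| ≤ ε/2 := by
          rw [abs_le]
          have h1 : s < g ys := lt_of_lt_of_le hcase (min_le_left _ _)
          have h2 : M j ≤ g ys := hMle j hj ys hys
          constructor <;> linarith
        refine ⟨pt2 (σ * g ys) ys, hrail ys hysuv, ?_⟩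
        calc dist (pt2 t yy) (pt2 (σ * g ys) ys) ≤ |t - σ * g ys| + |yy - ys| := pt2_dist_le _ _ _ _
          _ ≤ ε/2 + ε/2 := by
              apply add_le_add _ hwidth
              have heq : |t - σ * g ys| = |s - g ys| := by rw [hts, sigma_abs hσ]
              rw [heq]; exact hsys
          _ = ε := by ring
    · rw [pt2_zero, pt2_one, hts, ← mul_assoc, hσ2, one_mul]; exact hs2
  -- vertical claim
  have claimV : ∀ j, j < m →
      segment ℝ (pt2 (σ * M j) (Y j)) (pt2 (σ * M j) (Y (j+1))) ⊆ S := by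
    intro j hj z hz
    obtain ⟨t, ht, rfl⟩ := mem_vert_seg hz
    obtain ⟨hmin, hmax⟩ := mem_real_segment ht
    have htJ : t ∈ Icc (Y j) (Y (j+1)) := by
      constructor
      · calc Y j = min (Y j) (Y (j+1)) := by rw [min_eq_left (hYmono j)]
          _ ≤ t := hmin
      · calc t ≤ max (Y j) (Y (j+1)) := hmax
          _ = Y (j+1) := by rw [max_eq_right (hYmono j)]
    obtain ⟨ys, hys, hgys⟩ := hMapprox j hj
    have hysuv : ys ∈ Icc u v := hsub j hj hys
    apply hS
    · rw [pt2_one]; exact hsub j hj htJ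
    · refine ⟨pt2 (σ * g ys) ys, hrail ys hysuv, ?_⟩
      calc dist (pt2 (σ * M j) t) (pt2 (σ * g ys) ys)
          ≤ |σ * M j - σ * g ys| + |t - ys| := pt2_dist_le _ _ _ _
        _ ≤ ε/2 + ε/2 := by
            apply add_le_add
            · have hMgys : M j ≤ g ys := hMle j hj ys hys
              rw [sigma_abs hσ, abs_le]
              constructor <;> linarith
            · rw [abs_le]
              have h1 := hYstep j
              constructor <;> linarith [htJ.1, htJ.2, hys.1, hys.2, hhε]
        _ = ε := by ring
    · rw [pt2_zero, pt2_one, ← mul_assoc, hσ2, one_mul]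
      exact hMle j hj t htJ
  -- build the path
  classical
  set p : ℕ → EucR 2 := fun k =>
    if 3 * m ≤ k then pt2 (σ * g v) v
    else if k % 3 = 0 then pt2 (σ * g (Y (k/3))) (Y (k/3))
    else if k % 3 = 1 then pt2 (σ * M (k/3)) (Y (k/3))
    else pt2 (σ * M (k/3)) (Y (k/3 + 1)) with hp
  have hp0 : ∀ j ≤ m, p (3*j) = pt2 (σ * g (Y j)) (Y j) := by
    intro j hj
    rcases eq_or_lt_of_le hj with rfl | hj'
    · rw [hp]; simp only
      rw [if_pos (le_refl (3*m)), hYm]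
    · have h1 : ¬ (3*m ≤ 3*j) := by omega
      have h2 : (3*j) % 3 = 0 := by omega
      have h3 : (3*j) / 3 = j := by omega
      rw [hp]; simp only
      rw [if_neg h1, if_pos h2, h3]
  have hp1 : ∀ j < m, p (3*j+1) = pt2 (σ * M j) (Y j) := by
    intro j hj
    have h1 : ¬ (3*m ≤ 3*j+1) := by omega
    have h2 : (3*j+1) % 3 = 1 := by omega
    have h2' : ¬ ((3*j+1) % 3 = 0) := by omega
    have h3 : (3*j+1) / 3 = j := by omega
    rw [hp]; simp only
    rw [if_neg h1, if_neg h2', if_pos h2, h3]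
  have hp2 : ∀ j < m, p (3*j+2) = pt2 (σ * M j) (Y (j+1)) := by
    intro j hj
    have h1 : ¬ (3*m ≤ 3*j+2) := by omega
    have h2 : ¬ ((3*j+2) % 3 = 0) := by omega
    have h2' : ¬ ((3*j+2) % 3 = 1) := by omega
    have h3 : (3*j+2) / 3 = j := by omega
    rw [hp]; simp only
    rw [if_neg h1, if_neg h2, if_neg h2', h3]
  refine ⟨3*m, p, ?_, ?_, ?_⟩
  · have := hp0 0 (by omega)
    simpa [hY0] using this
  · rw [hp]; simp only
    rw [if_pos (le_refl (3*m))]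
    
  · intro k hk
    have hr : k % 3 = 0 ∨ k % 3 = 1 ∨ k % 3 = 2 := by omega
    rcases hr with hr | hr | hr
    · obtain ⟨j, rfl⟩ : ∃ j, k = 3*j := ⟨k/3, by omega⟩
      have hj : j < m := by omega
      rw [show 3*j+1 = 3*j+1 from rfl, hp0 j (by omega), show (3*j)+1 = 3*j+1 from rfl, hp1 j hj]
      exact ⟨horiz_orth _ _ _, claimH j hj (Y j) ⟨le_refl _, hYmono j⟩⟩
    · obtain ⟨j, rfl⟩ : ∃ j, k = 3*j+1 := ⟨k/3, by omega⟩
      have hj : j < m := by omega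
      rw [hp1 j hj, show (3*j+1)+1 = 3*j+2 from rfl, hp2 j hj]
      exact ⟨vert_orth _ _ _, claimV j hj⟩
    · obtain ⟨j, rfl⟩ : ∃ j, k = 3*j+2 := ⟨k/3, by omega⟩
      have hj : j < m := by omega
      rw [hp2 j hj, show (3*j+2)+1 = 3*(j+1) by ring, hp0 (j+1) (by omega)]
      constructor
      · exact isOrthSeg_symm (horiz_orth _ _ _)
      · rw [segment_symm]
        exact claimH j hj (Y (j+1)) ⟨hYmono j, le_refl _⟩
end Climb
section LemA
variable {K C : Set (EucR 2)} {ε : ℝ}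

lemma mem_sliceK_iff {x y : ℝ} : x ∈ sliceK K y ↔ pt2 x y ∈ K := Iff.rfl

lemma K_sub_C (hε : 0 < ε) (hnear : ∀ z : EucR 2, (∃ w ∈ K, dist z w ≤ ε) → z ∈ C) :
    K ⊆ C := fun z hz => hnear z ⟨z, hz, by simp [hε.le]⟩

lemma climb_left (hKconv : Convex ℝ K) (hKcomp : IsCompact K) (hKne : K.Nonempty)
    (hε : 0 < ε) (hnear : ∀ z : EucR 2, (∃ w ∈ K, dist z w ≤ ε) → z ∈ C)
    {u : ℝ} (hu : cK K ≤ u) (hud : u ≤ dK K) :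
    ∃ n p, p 0 = pt2 (aK K u) u ∧ p n = pt2 (aK K (dK K)) (dK K) ∧
      IsOrthPathIn (C \ interior K) p n := by
  have hrail : ∀ y ∈ Icc u (dK K), pt2 ((1:ℝ) * aK K y) y ∈ K := by
    intro y hy
    rw [one_mul]
    exact aK_mem hKcomp (sliceK_nonempty hKconv hKcomp hKne (le_trans hu hy.1) hy.2)
  obtain ⟨R, hR⟩ := exists_bound hKcomp
  have hgbdd : ∃ R' : ℝ, ∀ y ∈ Icc u (dK K), -R' ≤ aK K y := by
    refine ⟨R, fun y hy => ?_⟩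
    have h1 := (hR _ (hrail y hy)).1
    rw [pt2_zero, one_mul] at h1
    linarith [abs_le.mp h1 |>.1]
  have hS : ∀ z : EucR 2, z 1 ∈ Icc u (dK K) → (∃ w ∈ K, dist z w ≤ ε) →
      (1:ℝ) * z 0 ≤ aK K (z 1) → z ∈ C \ interior K := by
    intro z _ h2 h3
    rw [one_mul] at h3
    exact ⟨hnear z h2, fun hint => absurd h3 (not_le.mpr (interior_easy hKcomp hint).1)⟩
  obtain ⟨n, p, h0, hn, hpath⟩ := climb hKconv (C \ interior K) 1 (Or.inl rfl) (aK K) u (dK K)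
    hud ε hε hrail hgbdd hS
  rw [one_mul] at h0 hn
  exact ⟨n, p, h0, hn, hpath⟩

lemma climb_right (hKconv : Convex ℝ K) (hKcomp : IsCompact K) (hKne : K.Nonempty)
    (hε : 0 < ε) (hnear : ∀ z : EucR 2, (∃ w ∈ K, dist z w ≤ ε) → z ∈ C)
    {u : ℝ} (hu : cK K ≤ u) (hud : u ≤ dK K) :
    ∃ n p, p 0 = pt2 (bK K u) u ∧ p n = pt2 (bK K (dK K)) (dK K) ∧
      IsOrthPathIn (C \ interior K) p n := by
  have hrail : ∀ y ∈ Icc u (dK K), pt2 ((-1:ℝ) * (- bK K y)) y ∈ K := by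
    intro y hy
    rw [show (-1:ℝ) * (- bK K y) = bK K y by ring]
    exact bK_mem hKcomp (sliceK_nonempty hKconv hKcomp hKne (le_trans hu hy.1) hy.2)
  obtain ⟨R, hR⟩ := exists_bound hKcomp
  have hgbdd : ∃ R' : ℝ, ∀ y ∈ Icc u (dK K), -R' ≤ - bK K y := by
    refine ⟨R, fun y hy => ?_⟩
    have h1 := (hR _ (hrail y hy)).1
    rw [pt2_zero, show (-1:ℝ) * (- bK K y) = bK K y by ring] at h1
    linarith [abs_le.mp h1 |>.2]
  have hS : ∀ z : EucR 2, z 1 ∈ Icc u (dK K) → (∃ w ∈ K, dist z w ≤ ε) →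
      (-1:ℝ) * z 0 ≤ - bK K (z 1) → z ∈ C \ interior K := by
    intro z _ h2 h3
    have h3' : bK K (z 1) ≤ z 0 := by linarith
    exact ⟨hnear z h2, fun hint =>
      absurd h3' (not_le.mpr (interior_easy hKcomp hint).2.1)⟩
  obtain ⟨n, p, h0, hn, hpath⟩ := climb hKconv (C \ interior K) (-1) (Or.inr rfl)
    (fun y => - bK K y) u (dK K) hud ε hε hrail hgbdd hS
  rw [show (-1:ℝ) * -bK K u = bK K u by ring] at h0
  rw [show (-1:ℝ) * -bK K (dK K) = bK K (dK K) by ring] at hn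
  exact ⟨n, p, h0, hn, hpath⟩

lemma extreme_seg (hKconv : Convex ℝ K) (hKcomp : IsCompact K)
    (hε : 0 < ε) (hnear : ∀ z : EucR 2, (∃ w ∈ K, dist z w ≤ ε) → z ∈ C)
    {yy x₁ x₂ : ℝ} (hyy : yy = cK K ∨ yy = dK K)
    (h₁ : x₁ ∈ sliceK K yy) (h₂ : x₂ ∈ sliceK K yy) :
    segment ℝ (pt2 x₁ yy) (pt2 x₂ yy) ⊆ C \ interior K := by
  intro z hz
  obtain ⟨t, ht, rfl⟩ := mem_horiz_seg hz
  obtain ⟨hmin, hmax⟩ := mem_real_segment ht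
  have htsl : t ∈ sliceK K yy := by
    have hminm : min x₁ x₂ ∈ sliceK K yy := by
      rcases min_cases x₁ x₂ with ⟨h, _⟩ | ⟨h, _⟩ <;> rw [h] <;> assumption
    have hmaxm : max x₁ x₂ ∈ sliceK K yy := by
      rcases max_cases x₁ x₂ with ⟨h, _⟩ | ⟨h, _⟩ <;> rw [h] <;> assumption
    exact mem_slice_of_between hKconv hminm hmaxm hmin hmax
  refine ⟨K_sub_C hε hnear htsl, fun hint => ?_⟩
  have h3 := (interior_easy hKcomp hint).2.2
  rw [pt2_one] at h3
  rcases hyy with rfl | rfl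
  · exact absurd h3.1 (lt_irrefl _)
  · exact absurd h3.2 (lt_irrefl _)

lemma to_top (hKconv : Convex ℝ K) (hKcomp : IsCompact K) (hKne : (interior K).Nonempty)
    (hε : 0 < ε) (hnear : ∀ z : EucR 2, (∃ w ∈ K, dist z w ≤ ε) → z ∈ C)
    {e : EucR 2} (he : e ∈ frontier K) :
    ∃ n p, p 0 = e ∧ p n = pt2 (aK K (dK K)) (dK K) ∧
      IsOrthPathIn (C \ interior K) p n := by
  have hKne' : K.Nonempty := ⟨_, interior_subset hKne.some_mem⟩
  have heK : e ∈ K := by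
    rw [IsClosed.frontier_eq hKcomp.isClosed] at he; exact he.1
  have hsl : e 0 ∈ sliceK K (e 1) := by
    rw [mem_sliceK_iff, pt2_coords]; exact heK
  have hcd : cK K ≤ dK K := le_trans (cK_le hKcomp heK) (le_dK hKcomp heK)
  have hsld : (sliceK K (dK K)).Nonempty := sliceK_nonempty hKconv hKcomp hKne' hcd (le_refl _)
  have he1 : cK K ≤ e 1 := cK_le hKcomp heK
  have he1' : e 1 ≤ dK K := le_dK hKcomp heK
  rcases frontier_classify hKconv hKcomp hKne he with hcase | hcase | hcase | hcase
  · -- left boundary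
    obtain ⟨n, p, h0, hn, hpath⟩ := climb_left hKconv hKcomp hKne' hε hnear he1 he1'
    rw [← hcase, pt2_coords] at h0
    exact ⟨n, p, h0, hn, hpath⟩
  · -- right boundary: climb right then across the top
    obtain ⟨n, p, h0, hn, hpath⟩ := climb_right hKconv hKcomp hKne' hε hnear he1 he1'
    rw [← hcase, pt2_coords] at h0
    have hseg : segment ℝ (pt2 (bK K (dK K)) (dK K)) (pt2 (aK K (dK K)) (dK K)) ⊆
        C \ interior K :=
      extreme_seg hKconv hKcomp hε hnear (Or.inr rfl) (bK_mem hKcomp hsld) (aK_mem hKcomp hsld)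
    refine ⟨n + 1, pappend p (psingle (pt2 (bK K (dK K)) (dK K)) (pt2 (aK K (dK K)) (dK K))) n,
      ?_, ?_, ?_⟩
    · rw [pappend_zero, h0]
    · rw [pappend_last _ _ _ _ (by rw [hn]; rfl)]; rfl
    · exact isOrthPathIn_append hpath
        (isOrthPathIn_single (horiz_orth _ _ _) hseg) (by rw [hn]; rfl)
  · -- bottom: across the bottom then climb left
    obtain ⟨n, p, h0, hn, hpath⟩ := climb_left hKconv hKcomp hKne' hε hnear (le_refl (cK K)) hcd
    have hslc : (sliceK K (cK K)).Nonempty := sliceK_nonempty hKconv hKcomp hKne' (le_refl _) hcd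
    have hsl' : e 0 ∈ sliceK K (cK K) := by rw [← hcase]; exact hsl
    have hseg : segment ℝ e (pt2 (aK K (cK K)) (cK K)) ⊆ C \ interior K := by
      have := extreme_seg hKconv hKcomp hε hnear (Or.inl rfl) hsl' (aK_mem hKcomp hslc)
      rwa [show pt2 (e 0) (cK K) = e by rw [← hcase, pt2_coords]] at this
    have horth : IsOrthSeg e (pt2 (aK K (cK K)) (cK K)) := by
      rw [show e = pt2 (e 0) (cK K) by rw [← hcase, pt2_coords]]
      exact horiz_orth _ _ _
    refine ⟨1 + n, pappend (psingle e (pt2 (aK K (cK K)) (cK K))) p 1, ?_, ?_, ?_⟩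
    · rw [pappend_zero]; rfl
    · rw [pappend_last _ _ _ _ (by rw [h0]; rfl), hn]
    · exact isOrthPathIn_append (isOrthPathIn_single horth hseg) hpath (by rw [h0]; rfl)
  · -- top
    have hsl' : e 0 ∈ sliceK K (dK K) := by rw [← hcase]; exact hsl
    have hseg : segment ℝ e (pt2 (aK K (dK K)) (dK K)) ⊆ C \ interior K := by
      have := extreme_seg hKconv hKcomp hε hnear (Or.inr rfl) hsl' (aK_mem hKcomp hsld)
      rwa [show pt2 (e 0) (dK K) = e by rw [← hcase, pt2_coords]] at this
    have horth : IsOrthSeg e (pt2 (aK K (dK K)) (dK K)) := by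
      rw [show e = pt2 (e 0) (dK K) by rw [← hcase, pt2_coords]]
      exact horiz_orth _ _ _
    exact ⟨1, psingle e (pt2 (aK K (dK K)) (dK K)), rfl, rfl,
      isOrthPathIn_single horth hseg⟩

lemma boundary_to_boundary (hKconv : Convex ℝ K) (hKcomp : IsCompact K)
    (hKne : (interior K).Nonempty)
    (hε : 0 < ε) (hnear : ∀ z : EucR 2, (∃ w ∈ K, dist z w ≤ ε) → z ∈ C)
    {e f : EucR 2} (he : e ∈ frontier K) (hf : f ∈ frontier K) :
    ∃ n p, p 0 = e ∧ p n = f ∧ IsOrthPathIn (C \ interior K) p n := by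
  obtain ⟨n₁, p₁, h₁0, h₁n, hpath₁⟩ := to_top hKconv hKcomp hKne hε hnear he
  obtain ⟨n₂, p₂, h₂0, h₂n, hpath₂⟩ := to_top hKconv hKcomp hKne hε hnear hf
  refine ⟨n₁ + n₂, pappend p₁ (prev' p₂ n₂) n₁, ?_, ?_, ?_⟩
  · rw [pappend_zero, h₁0]
  · rw [pappend_last _ _ _ _ (by rw [h₁n, prev'_zero, h₂n]), prev'_last, h₂0]
  · exact isOrthPathIn_append hpath₁ (isOrthPathIn_reverse hpath₂)
      (by rw [h₁n, prev'_zero, h₂n])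
end LemA
section Entry
variable {K C : Set (EucR 2)}

lemma coord_affine (u v : EucR 2) (t : ℝ) (j : Fin 2) :
    (u + t • (v - u)) j = u j + t * (v j - u j) := by
  simp [PiLp.add_apply, PiLp.smul_apply, PiLp.sub_apply, smul_eq_mul]

lemma entry_lemma (hKcomp : IsCompact K) {u v : EucR 2}
    (hCseg : segment ℝ u v ⊆ C) (horth : IsOrthSeg u v)
    (hmeet : (segment ℝ u v ∩ K).Nonempty) (hu : u ∉ interior K) :
    ∃ e ∈ frontier K, IsOrthSeg u e ∧ segment ℝ u e ⊆ C \ interior K := by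
  set φ : ℝ → EucR 2 := fun t => u + t • (v - u) with hφ
  have hφcont : Continuous φ := continuous_const.add (continuous_id.smul continuous_const)
  set A : Set ℝ := Icc (0:ℝ) 1 ∩ φ ⁻¹' K with hA
  have hAclosed : IsClosed A := isClosed_Icc.inter (hKcomp.isClosed.preimage hφcont)
  have hAne : A.Nonempty := by
    obtain ⟨z, hz1, hz2⟩ := hmeet
    rw [segment_eq_image'] at hz1
    obtain ⟨θ, hθ, rfl⟩ := hz1
    exact ⟨θ, hθ, hz2⟩
  have hAbdd : BddBelow A := ⟨0, fun t ht => ht.1.1⟩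
  set t₀ := sInf A with ht₀
  have ht₀A : t₀ ∈ A := hAclosed.csInf_mem hAne hAbdd
  have ht₀01 : t₀ ∈ Icc (0:ℝ) 1 := ht₀A.1
  set e := φ t₀ with he
  have heK : e ∈ K := ht₀A.2
  have heseg : e ∈ segment ℝ u v := by
    rw [segment_eq_image']
    exact ⟨t₀, ht₀01, rfl⟩
  have heI : e ∉ interior K := by
    intro hint
    rcases eq_or_lt_of_le ht₀01.1 with heq | hpos
    · apply hu
      have : φ 0 = u := by rw [hφ]; simp
      rw [he, ← heq] at hint
      rwa [this] at hint
    · have hnb : φ ⁻¹' interior K ∈ nhds t₀ :=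
        hφcont.continuousAt.preimage_mem_nhds (isOpen_interior.mem_nhds hint)
      rw [Metric.mem_nhds_iff] at hnb
      obtain ⟨δ, hδ, hball⟩ := hnb
      set t' := max 0 (t₀ - δ/2) with ht'
      have ht'lt : t' < t₀ := by
        rw [ht']
        apply max_lt hpos (by linarith)
      have ht'A : t' ∈ A := by
        refine ⟨⟨le_max_left _ _, le_trans ht'lt.le ht₀01.2⟩, ?_⟩
        have h1 : t' ∈ ball t₀ δ := by
          rw [mem_ball, Real.dist_eq, abs_lt]
          have h2 : t₀ - δ/2 ≤ t' := le_max_right _ _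
          constructor <;> linarith
        have h2 : φ t' ∈ interior K := hball h1
        exact mem_preimage.mpr (interior_subset h2)
      exact absurd (csInf_le hAbdd ht'A) (not_le.mpr ht'lt)
  have hefr : e ∈ frontier K := by
    rw [IsClosed.frontier_eq hKcomp.isClosed]; exact ⟨heK, heI⟩
  refine ⟨e, hefr, ?_, ?_⟩
  · obtain ⟨i, hi⟩ := horth
    refine ⟨i, fun j hj => ?_⟩
    show u j = (u + t₀ • (v - u)) j
    rw [coord_affine, hi j hj]
    ring
  · intro z hz
    rw [segment_eq_image'] at hz
    obtain ⟨θ, hθ, rfl⟩ := hz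
    have hzφ : u + θ • (e - u) = φ (θ * t₀) := by
      show u + θ • (u + t₀ • (v - u) - u) = u + (θ * t₀) • (v - u)
      rw [add_sub_cancel_left, smul_smul]
    have hθt : θ * t₀ ∈ Icc (0:ℝ) 1 := by
      constructor
      · exact mul_nonneg hθ.1 ht₀01.1
      · calc θ * t₀ ≤ 1 * t₀ := mul_le_mul_of_nonneg_right hθ.2 ht₀01.1
          _ = t₀ := one_mul _
          _ ≤ 1 := ht₀01.2
    have hzseg : u + θ • (e - u) ∈ segment ℝ u v := by
      rw [hzφ, segment_eq_image']
      exact ⟨θ * t₀, hθt, rfl⟩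
    refine ⟨hCseg hzseg, fun hint => ?_⟩
    have hint' : u + θ • (e - u) ∈ interior K := hint
    have hle : θ * t₀ ≤ t₀ := by
      calc θ * t₀ ≤ 1 * t₀ := mul_le_mul_of_nonneg_right hθ.2 ht₀01.1
        _ = t₀ := one_mul _
    rcases eq_or_lt_of_le hle with heq | hlt
    · rw [hzφ, heq] at hint'
      exact heI hint'
    · have hA' : θ * t₀ ∈ A := by
        refine ⟨hθt, ?_⟩
        show φ (θ * t₀) ∈ K
        rw [← hzφ]
        exact interior_subset hint'
      exact absurd (csInf_le hAbdd hA') (not_le.mpr hlt)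
end Entry
section Main


theorem main_thm (C K : Set (EucR 2))
    (hCo : OrthConnected C)
    (hKconv : Convex ℝ K) (hKcomp : IsCompact K) (hKne : (interior K).Nonempty)
    (hKC : K ⊆ interior C) :
    OrthConnected (C \ interior K) := by
  classical
  obtain ⟨δ, hδ, hthick⟩ := hKcomp.exists_thickening_subset_open isOpen_interior hKC
  have hε : 0 < δ/2 := by positivity
  have hnear : ∀ z : EucR 2, (∃ w ∈ K, dist z w ≤ δ/2) → z ∈ C := by
    rintro z ⟨w, hw, hd⟩
    exact interior_subset (hthick (Metric.mem_thickening_iff.mpr ⟨w, hw, by linarith⟩))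
  intro x hx y hy
  obtain ⟨n, p, hp0, hpn, hpath⟩ := hCo x hx.1 y hy.1
  set Q : ℕ → Prop := fun k => k < n ∧ (segment ℝ (p k) (p (k+1)) ∩ K).Nonempty with hQdef
  by_cases hmeet : ∃ k, Q k
  · -- the path meets K somewhere
    set k₀ := Nat.find hmeet with hk₀def
    have hk₀ : Q k₀ := Nat.find_spec hmeet
    have hk₀min : ∀ j, j < k₀ → ¬ Q j := fun j hj => Nat.find_min hmeet hj
    set k₁ := Nat.findGreatest Q n with hk₁def
    have hk₁ : Q k₁ := Nat.findGreatest_spec (le_of_lt hk₀.1) hk₀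
    have hk₁max : ∀ j, k₁ < j → j ≤ n → ¬ Q j := fun j h1 h2 =>
      Nat.findGreatest_is_greatest h1 h2
    -- entry point e
    have hu0 : p k₀ ∉ interior K := by
      rcases Nat.eq_zero_or_pos k₀ with h0 | h0
      · rw [h0, hp0]; exact hx.2
      · intro hint
        have hQ' : Q (k₀ - 1) := by
          refine ⟨by omega, ⟨p k₀, ?_, interior_subset hint⟩⟩
          have h1 : (k₀ - 1) + 1 = k₀ := by omega
          rw [h1]
          exact right_mem_segment ℝ _ _
        exact hk₀min (k₀-1) (by omega) hQ'
    obtain ⟨e, hef, heorth, heseg⟩ := entry_lemma hKcomp (hpath k₀ hk₀.1).2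
      (hpath k₀ hk₀.1).1 hk₀.2 hu0
    -- exit point f
    have hv0 : p (k₁+1) ∉ interior K := by
      rcases eq_or_lt_of_le (Nat.succ_le_of_lt hk₁.1) with h0 | h0
      · rw [show k₁+1 = n from h0, hpn]; exact hy.2
      · intro hint
        have hQ' : Q (k₁+1) := ⟨h0, ⟨p (k₁+1), left_mem_segment ℝ _ _, interior_subset hint⟩⟩
        exact hk₁max (k₁+1) (by omega) (le_of_lt h0) hQ'
    have hsegsym : (segment ℝ (p (k₁+1)) (p k₁) ∩ K).Nonempty := by
      rw [segment_symm]; exact hk₁.2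
    obtain ⟨f, hff, hforth, hfseg⟩ := entry_lemma (C := C) hKcomp
      (show segment ℝ (p (k₁+1)) (p k₁) ⊆ C by rw [segment_symm]; exact (hpath k₁ hk₁.1).2)
      (isOrthSeg_symm (hpath k₁ hk₁.1).1) hsegsym hv0
    -- middle path along the boundary
    obtain ⟨nm, pm, hm0, hmn, hmpath⟩ := boundary_to_boundary hKconv hKcomp hKne hε hnear
      hef hff
    -- prefix
    have hpre1 : IsOrthPathIn (C \ interior K) p k₀ := by
      intro j hj
      have hjn : j < n := by omega
      refine ⟨(hpath j hjn).1, fun z hz => ⟨(hpath j hjn).2 hz, fun hint => ?_⟩⟩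
      exact hk₀min j hj ⟨hjn, ⟨z, hz, interior_subset hint⟩⟩
    have hpre : IsOrthPathIn (C \ interior K) (pappend p (psingle (p k₀) e) k₀) (k₀ + 1) :=
      isOrthPathIn_append hpre1 (isOrthPathIn_single heorth heseg) rfl
    -- tail
    set tail : ℕ → EucR 2 := fun j => p (k₁ + 1 + j) with htaildef
    have htailpath : IsOrthPathIn (C \ interior K) tail (n - k₁ - 1) := by
      intro j hj
      have hidx : k₁ + 1 + j < n := by omega
      have e1 : tail (j+1) = p ((k₁+1+j)+1) := rfl
      have e0 : tail j = p (k₁+1+j) := rfl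
      rw [e0, e1]
      refine ⟨(hpath _ hidx).1, fun z hz => ⟨(hpath _ hidx).2 hz, fun hint => ?_⟩⟩
      exact hk₁max (k₁+1+j) (by omega) (by omega) ⟨hidx, ⟨z, hz, interior_subset hint⟩⟩
    -- junctions and concatenation
    have hjunc1 : pappend p (psingle (p k₀) e) k₀ (k₀+1) = pm 0 := by
      rw [pappend_last p _ k₀ 1 rfl, hm0]
      rfl
    have hP1path : IsOrthPathIn (C \ interior K)
        (pappend (pappend p (psingle (p k₀) e) k₀) pm (k₀+1)) (k₀+1+nm) :=
      isOrthPathIn_append hpre hmpath hjunc1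
    have hjunc2 : pappend (pappend p (psingle (p k₀) e) k₀) pm (k₀+1) (k₀+1+nm)
        = psingle f (p (k₁+1)) 0 := by
      rw [pappend_last _ _ _ nm hjunc1, hmn]
      rfl
    have hP2path : IsOrthPathIn (C \ interior K)
        (pappend (pappend (pappend p (psingle (p k₀) e) k₀) pm (k₀+1))
          (psingle f (p (k₁+1))) (k₀+1+nm)) (k₀+1+nm+1) :=
      isOrthPathIn_append hP1path
        (isOrthPathIn_single (isOrthSeg_symm hforth) (by rw [segment_symm]; exact hfseg))
        hjunc2
    have hjunc3 : pappend (pappend (pappend p (psingle (p k₀) e) k₀) pm (k₀+1))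
        (psingle f (p (k₁+1))) (k₀+1+nm) (k₀+1+nm+1) = tail 0 := by
      rw [pappend_last _ _ _ 1 hjunc2]
      rfl
    have hP3path : IsOrthPathIn (C \ interior K)
        (pappend (pappend (pappend (pappend p (psingle (p k₀) e) k₀) pm (k₀+1))
          (psingle f (p (k₁+1))) (k₀+1+nm)) tail (k₀+1+nm+1)) (k₀+1+nm+1+(n-k₁-1)) :=
      isOrthPathIn_append hP2path htailpath hjunc3
    refine ⟨k₀+1+nm+1+(n-k₁-1), _, ?_, ?_, hP3path⟩
    · rw [pappend_zero, pappend_zero, pappend_zero, pappend_zero, hp0]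
    · rw [pappend_last _ _ _ _ hjunc3]
      show p (k₁+1+(n-k₁-1)) = y
      rw [show k₁+1+(n-k₁-1) = n by omega, hpn]
  · -- the path never meets K
    rw [not_exists] at hmeet
    refine ⟨n, p, hp0, hpn, fun k hk => ⟨(hpath k hk).1,
      fun z hz => ⟨(hpath k hk).2 hz, fun hint => ?_⟩⟩⟩
    exact hmeet k ⟨hk, ⟨z, hz, interior_subset hint⟩⟩
end Main


end Aux

/-- If `C ⊆ ℝ²` is compact and orthogonally connected and `K ⊆ int C` is a convex
body, then `C \ int K` is orthogonally connected. -/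
theorem orthConnected_diff_interior_convexBody (C K : Set (EucR 2))
    (hC : IsCompact C) (hCo : OrthConnected C)
    (hK : IsConvexBody K) (hKC : K ⊆ interior C) :
    OrthConnected (C \ interior K) := by
  obtain ⟨hKconv, hKcomp, hKne⟩ := hK
  exact main_thm C K hCo hKconv hKcomp hKne hKC
end

section
/- There exists an infinite family 𝒦 of pairwise disjoint convex bodies in ℝ² such that the intersection ⋂_{K ∈ 𝒦} (complement of int K) contains a point from which no nondegenerate orthogonal path in this intersection can start; in particular this intersection is not orthogonally connected. -/
open Set MeasureTheory Bornology
open scoped ENNReal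

-- ===== auxiliary construction =====
noncomputable section

lemma eucR2_ext {x y : EucR 2} (h0 : x 0 = y 0) (h1 : x 1 = y 1) : x = y := by
  ext j; fin_cases j <;> assumption

lemma dist_pt2 (a b c d : ℝ) :
    dist (pt2 a b) (pt2 c d) = Real.sqrt ((a - c) ^ 2 + (b - d) ^ 2) := by
  rw [EuclideanSpace.dist_eq]
  simp [pt2, Fin.sum_univ_two, Real.dist_eq, sq_abs]

lemma abs_le_sqrt_left (x y : ℝ) : |x| ≤ Real.sqrt (x ^ 2 + y ^ 2) := by
  rw [← Real.sqrt_sq_eq_abs]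
  exact Real.sqrt_le_sqrt (by nlinarith [sq_nonneg y])

lemma abs_le_sqrt_right (x y : ℝ) : |y| ≤ Real.sqrt (x ^ 2 + y ^ 2) := by
  rw [← Real.sqrt_sq_eq_abs]
  exact Real.sqrt_le_sqrt (by nlinarith [sq_nonneg x])

/-- Center of the `i`-th disk: disks accumulate at the origin along the four
half-axes. -/
def ctr (i : ℕ) : EucR 2 :=
  if i % 4 = 0 then pt2 ((1/2:ℝ) ^ (i / 4)) 0
  else if i % 4 = 1 then pt2 (-(1/2:ℝ) ^ (i / 4)) 0
  else if i % 4 = 2 then pt2 0 ((1/2:ℝ) ^ (i / 4))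
  else pt2 0 (-(1/2:ℝ) ^ (i / 4))

/-- Radius of the `i`-th disk. -/
def rad (i : ℕ) : ℝ := (1/2:ℝ) ^ (i / 4) / 8

/-- The family of disks. -/
def Kfam (i : ℕ) : Set (EucR 2) := Metric.closedBall (ctr i) (rad i)

lemma rad_pos (i : ℕ) : 0 < rad i := by unfold rad; positivity

lemma ctr_mem_interior (i : ℕ) : ctr i ∈ interior (Kfam i) :=
  Metric.ball_subset_interior_closedBall (Metric.mem_ball_self (rad_pos i))

lemma pow_half_lt {q q' : ℕ} (hlt : q < q') :
    (1/2:ℝ) ^ q / 8 + (1/2:ℝ) ^ q' / 8 < |(1/2:ℝ) ^ q - (1/2:ℝ) ^ q'| := by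
  have h1 : (1/2:ℝ) ^ q' ≤ (1/2:ℝ) ^ (q + 1) :=
    pow_le_pow_of_le_one (by norm_num) (by norm_num) (by omega)
  have h2 : (1/2:ℝ) ^ (q + 1) = (1/2:ℝ) ^ q / 2 := by rw [pow_succ]; ring
  have h3 : (0:ℝ) < (1/2:ℝ) ^ q := by positivity
  have h4 : (0:ℝ) < (1/2:ℝ) ^ q' := by positivity
  rw [abs_of_pos (by linarith)]
  linarith

set_option maxHeartbeats 2000000 in
lemma dist_ctr_gt (i j : ℕ) (hij : i ≠ j) : rad i + rad j < dist (ctr i) (ctr j) := by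
  have key : ∀ q q' : ℕ, q ≠ q' →
      (1/2:ℝ) ^ q / 8 + (1/2:ℝ) ^ q' / 8 < |(1/2:ℝ) ^ q - (1/2:ℝ) ^ q'| := by
    intro q q' h
    rcases h.lt_or_gt with h | h
    · exact pow_half_lt h
    · rw [abs_sub_comm]; linarith [pow_half_lt h]
  have ha0 : (0:ℝ) < (1/2:ℝ) ^ (i / 4) := by positivity
  have hb0 : (0:ℝ) < (1/2:ℝ) ^ (j / 4) := by positivity
  have hri : rad i = (1/2:ℝ) ^ (i / 4) / 8 := rfl
  have hrj : rad j = (1/2:ℝ) ^ (j / 4) / 8 := rfl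
  have hmi : i % 4 = 0 ∨ i % 4 = 1 ∨ i % 4 = 2 ∨ i % 4 = 3 := by omega
  have hmj : j % 4 = 0 ∨ j % 4 = 1 ∨ j % 4 = 2 ∨ j % 4 = 3 := by omega
  rw [hri, hrj]
  rcases hmi with hi | hi | hi | hi <;> rcases hmj with hj | hj | hj | hj <;>
      simp only [ctr, hi, hj] <;> norm_num <;> rw [dist_pt2] <;>
      rw [Real.lt_sqrt (by positivity)] <;>
      first
      | nlinarith [ha0, hb0, key (i/4) (j/4) (by omega),
          sq_abs ((1/2:ℝ)^(i/4) - (1/2:ℝ)^(j/4)),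
          abs_nonneg ((1/2:ℝ)^(i/4) - (1/2:ℝ)^(j/4))]
      | nlinarith [ha0, hb0, mul_pos ha0 hb0,
          sq_nonneg ((1/2:ℝ)^(i/4) - (1/2:ℝ)^(j/4))]

lemma p_not_mem (i : ℕ) : pt2 0 0 ∉ Kfam i := by
  intro h
  rw [Kfam, Metric.mem_closedBall] at h
  have hri : rad i = (1/2:ℝ) ^ (i / 4) / 8 := rfl
  have ha0 : (0:ℝ) < (1/2:ℝ) ^ (i / 4) := by positivity
  rw [hri] at h
  have hmi : i % 4 = 0 ∨ i % 4 = 1 ∨ i % 4 = 2 ∨ i % 4 = 3 := by omega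
  rcases hmi with hi | hi | hi | hi <;> simp only [ctr, hi] at h <;> norm_num at h <;>
      rw [dist_pt2] at h
  · have h1 := abs_le_sqrt_left ((0:ℝ) - (1/2:ℝ)^(i/4)) ((0:ℝ) - 0)
    rw [abs_of_neg (by linarith)] at h1; linarith
  · have h1 := abs_le_sqrt_left ((0:ℝ) - -(1/2:ℝ)^(i/4)) ((0:ℝ) - 0)
    rw [abs_of_pos (by linarith)] at h1; linarith
  · have h1 := abs_le_sqrt_right ((0:ℝ) - 0) ((0:ℝ) - (1/2:ℝ)^(i/4))
    rw [abs_of_neg (by linarith)] at h1; linarith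
  · have h1 := abs_le_sqrt_right ((0:ℝ) - 0) ((0:ℝ) - -(1/2:ℝ)^(i/4))
    rw [abs_of_pos (by linarith)] at h1; linarith

lemma y_not_mem (i : ℕ) : pt2 1 1 ∉ Kfam i := by
  intro h
  rw [Kfam, Metric.mem_closedBall] at h
  have hri : rad i = (1/2:ℝ) ^ (i / 4) / 8 := rfl
  have ha0 : (0:ℝ) < (1/2:ℝ) ^ (i / 4) := by positivity
  have ha1 : (1/2:ℝ) ^ (i / 4) ≤ 1 := pow_le_one₀ (by norm_num) (by norm_num)
  rw [hri] at h
  have hmi : i % 4 = 0 ∨ i % 4 = 1 ∨ i % 4 = 2 ∨ i % 4 = 3 := by omega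
  rcases hmi with hi | hi | hi | hi <;> simp only [ctr, hi] at h <;> norm_num at h <;>
      rw [dist_pt2] at h
  · have h1 := abs_le_sqrt_right ((1:ℝ) - (1/2:ℝ)^(i/4)) ((1:ℝ) - 0)
    rw [abs_of_pos (by linarith)] at h1; linarith
  · have h1 := abs_le_sqrt_right ((1:ℝ) - -(1/2:ℝ)^(i/4)) ((1:ℝ) - 0)
    rw [abs_of_pos (by linarith)] at h1; linarith
  · have h1 := abs_le_sqrt_left ((1:ℝ) - 0) ((1:ℝ) - (1/2:ℝ)^(i/4))
    rw [abs_of_pos (by linarith)] at h1; linarith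
  · have h1 := abs_le_sqrt_left ((1:ℝ) - 0) ((1:ℝ) - -(1/2:ℝ)^(i/4))
    rw [abs_of_pos (by linarith)] at h1; linarith

/-- No nondegenerate axis-parallel segment starting at the origin avoids all the
interiors of the disks. -/
lemma blocked (z : EucR 2) (hz : z ≠ pt2 0 0) (h : IsOrthSeg (pt2 0 0) z)
    (hseg : segment ℝ (pt2 0 0) z ⊆ ⋂ i, (interior (Kfam i))ᶜ) : False := by
  obtain ⟨i0, hi0⟩ := h
  have main : ∀ m : ℕ, ctr m ∈ segment ℝ (pt2 0 0) z → False := by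
    intro m hm
    have := hseg hm
    rw [mem_iInter] at this
    exact this m (ctr_mem_interior m)
  have seg_mem : ∀ θ : ℝ, 0 ≤ θ → θ ≤ 1 → θ • z ∈ segment ℝ (pt2 0 0) z := by
    intro θ h0 h1
    refine ⟨1 - θ, θ, by linarith, h0, by ring_nf, ?_⟩
    have hz0 : pt2 0 0 = (0 : EucR 2) := eucR2_ext rfl rfl
    rw [hz0, smul_zero, zero_add]
  fin_cases i0
  · -- horizontal: z 1 = 0
    have hz1 : z 1 = 0 := ((hi0 1 (by decide)).symm : z 1 = pt2 0 0 1)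
    have ht : z 0 ≠ 0 := fun h0 => hz (eucR2_ext h0 hz1)
    obtain ⟨q, hq⟩ := exists_pow_lt_of_lt_one (abs_pos.mpr ht) (by norm_num : (1/2:ℝ) < 1)
    have hqpos : (0:ℝ) < (1/2:ℝ) ^ q := by positivity
    rcases ht.lt_or_gt with htn | htp
    · set θ := -((1/2:ℝ) ^ q) / z 0 with hθ
      have hθ' : θ = (1/2:ℝ) ^ q / (-(z 0)) := by rw [hθ]; ring
      have habs : |z 0| = -(z 0) := abs_of_neg htn
      have h0 : 0 ≤ θ := by rw [hθ']; exact le_of_lt (div_pos hqpos (by linarith))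
      have h1 : θ ≤ 1 := by
        rw [hθ', div_le_one (by linarith)]; linarith
      apply main (4*q+1)
      have hc : θ • z = ctr (4*q+1) := by
        have hmod : (4*q+1) % 4 = 1 := by omega
        have hdiv : (4*q+1) / 4 = q := by omega
        apply eucR2_ext
        · show θ * z 0 = ctr (4*q+1) 0
          simp only [ctr, hmod, hdiv]
          norm_num
          show θ * z 0 = -(1/2:ℝ)^q
          rw [hθ, div_mul_cancel₀ _ ht]
        · show θ * z 1 = ctr (4*q+1) 1
          simp only [ctr, hmod, hdiv]
          norm_num
          show θ * z 1 = 0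
          rw [hz1, mul_zero]
      rw [← hc]; exact seg_mem θ h0 h1
    · set θ := ((1/2:ℝ) ^ q) / z 0 with hθ
      have h0 : 0 ≤ θ := le_of_lt (div_pos hqpos htp)
      have habs : |z 0| = z 0 := abs_of_pos htp
      have h1 : θ ≤ 1 := by
        rw [hθ, div_le_one htp]; linarith
      apply main (4*q)
      have hc : θ • z = ctr (4*q) := by
        have hmod : (4*q) % 4 = 0 := by omega
        have hdiv : (4*q) / 4 = q := by omega
        apply eucR2_ext
        · show θ * z 0 = ctr (4*q) 0
          simp only [ctr, hmod, hdiv]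
          norm_num
          show θ * z 0 = (1/2:ℝ)^q
          rw [hθ, div_mul_cancel₀ _ ht]
        · show θ * z 1 = ctr (4*q) 1
          simp only [ctr, hmod, hdiv]
          norm_num
          show θ * z 1 = 0
          rw [hz1, mul_zero]
      rw [← hc]; exact seg_mem θ h0 h1
  · -- vertical: z 0 = 0
    have hz0 : z 0 = 0 := ((hi0 0 (by decide)).symm : z 0 = pt2 0 0 0)
    have ht : z 1 ≠ 0 := fun h1 => hz (eucR2_ext hz0 h1)
    obtain ⟨q, hq⟩ := exists_pow_lt_of_lt_one (abs_pos.mpr ht) (by norm_num : (1/2:ℝ) < 1)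
    have hqpos : (0:ℝ) < (1/2:ℝ) ^ q := by positivity
    rcases ht.lt_or_gt with htn | htp
    · set θ := -((1/2:ℝ) ^ q) / z 1 with hθ
      have hθ' : θ = (1/2:ℝ) ^ q / (-(z 1)) := by rw [hθ]; ring
      have habs : |z 1| = -(z 1) := abs_of_neg htn
      have h0 : 0 ≤ θ := by rw [hθ']; exact le_of_lt (div_pos hqpos (by linarith))
      have h1 : θ ≤ 1 := by
        rw [hθ', div_le_one (by linarith)]; linarith
      apply main (4*q+3)
      have hc : θ • z = ctr (4*q+3) := by
        have hmod : (4*q+3) % 4 = 3 := by omega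
        have hdiv : (4*q+3) / 4 = q := by omega
        apply eucR2_ext
        · show θ * z 0 = ctr (4*q+3) 0
          simp only [ctr, hmod, hdiv]
          norm_num
          show θ * z 0 = 0
          rw [hz0, mul_zero]
        · show θ * z 1 = ctr (4*q+3) 1
          simp only [ctr, hmod, hdiv]
          norm_num
          show θ * z 1 = -(1/2:ℝ)^q
          rw [hθ, div_mul_cancel₀ _ ht]
      rw [← hc]; exact seg_mem θ h0 h1
    · set θ := ((1/2:ℝ) ^ q) / z 1 with hθ
      have h0 : 0 ≤ θ := le_of_lt (div_pos hqpos htp)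
      have habs : |z 1| = z 1 := abs_of_pos htp
      have h1 : θ ≤ 1 := by
        rw [hθ, div_le_one htp]; linarith
      apply main (4*q+2)
      have hc : θ • z = ctr (4*q+2) := by
        have hmod : (4*q+2) % 4 = 2 := by omega
        have hdiv : (4*q+2) / 4 = q := by omega
        apply eucR2_ext
        · show θ * z 0 = ctr (4*q+2) 0
          simp only [ctr, hmod, hdiv]
          norm_num
          show θ * z 0 = 0
          rw [hz0, mul_zero]
        · show θ * z 1 = ctr (4*q+2) 1
          simp only [ctr, hmod, hdiv]
          norm_num
          show θ * z 1 = (1/2:ℝ)^q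
          rw [hθ, div_mul_cancel₀ _ ht]
      rw [← hc]; exact seg_mem θ h0 h1

lemma block_path : ∀ n : ℕ, ∀ γ : ℕ → EucR 2,
    IsOrthPathIn (⋂ i, (interior (Kfam i))ᶜ) γ n → γ 0 = pt2 0 0 →
    ∀ k ≤ n, γ k = pt2 0 0 := by
  intro n γ hpath h0 k
  induction k with
  | zero => exact fun _ => h0
  | succ m ih =>
    intro hk
    have hm : γ m = pt2 0 0 := ih (by omega)
    obtain ⟨hseg, hsub⟩ := hpath m (by omega)
    by_contra hne
    rw [hm] at hseg hsub
    exact blocked (γ (m+1)) hne hseg hsub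

end
-- ===== end auxiliary construction =====

/-- There is an infinite family of pairwise disjoint convex bodies in `ℝ²` such that
the intersection of the complements of their interiors contains a point from which
no nondegenerate orthogonal path in this intersection can start; in particular this
intersection is not orthogonally connected. -/
theorem exists_infinite_family_not_orthConnected :
    ∃ K : ℕ → Set (EucR 2),
      (∀ i, IsConvexBody (K i)) ∧ Pairwise (Function.onFun Disjoint K) ∧
      ∃ p ∈ ⋂ i, (interior (K i))ᶜ,
        (∀ n : ℕ, ∀ γ : ℕ → EucR 2,
            IsOrthPathIn (⋂ i, (interior (K i))ᶜ) γ n → γ 0 = p → ∀ k ≤ n, γ k = p) ∧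
        ¬ OrthConnected (⋂ i, (interior (K i))ᶜ) := by
  refine ⟨Kfam, fun i => ⟨convex_closedBall _ _, isCompact_closedBall _ _,
    ⟨ctr i, ctr_mem_interior i⟩⟩, ?_, pt2 0 0, ?_, block_path, ?_⟩
  · intro i j hij
    exact Metric.closedBall_disjoint_closedBall (dist_ctr_gt i j hij)
  · exact mem_iInter.mpr fun i h => p_not_mem i (interior_subset h)
  · intro hOC
    have hp : pt2 0 0 ∈ ⋂ i, (interior (Kfam i))ᶜ :=
      mem_iInter.mpr fun i h => p_not_mem i (interior_subset h)
    have hy : pt2 1 1 ∈ ⋂ i, (interior (Kfam i))ᶜ :=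
      mem_iInter.mpr fun i h => y_not_mem i (interior_subset h)
    obtain ⟨n, γ, h0, hn, hpath⟩ := hOC (pt2 0 0) hp (pt2 1 1) hy
    have := block_path n γ hpath h0 n le_rfl
    rw [hn] at this
    have h01 : (1:ℝ) = 0 := congrFun (congrArg (fun v : EucR 2 => (v : Fin 2 → ℝ)) this) 0
    norm_num at h01
end

section
/- Let S ⊆ ℝ² have connected interior and satisfy S = cl(int S), with S compact. Then S is staircase connected if and only if S is orthogonally convex and there is no point x ∈ S with hw_x(S) = vw_x(S) = 0. -/
open Set MeasureTheory Bornology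
open scoped ENNReal

namespace StairAux

lemma pt2_eta (x : EucR 2) : pt2 (x 0) (x 1) = x := by ext j; fin_cases j <;> rfl

lemma coord_mem_uIcc {d : ℕ} {u v w : EucR d} (h : w ∈ segment ℝ u v) (j : Fin d) :
    w j ∈ uIcc (u j) (v j) := by
  rw [← segment_eq_uIcc]
  obtain ⟨a, b, ha, hb, hab, rfl⟩ := h
  exact ⟨a, b, ha, hb, hab, rfl⟩

lemma mem_segment_of_coord {d : ℕ} {u v w : EucR d} {i : Fin d}
    (huv : ∀ j, j ≠ i → u j = v j) (hwu : ∀ j, j ≠ i → w j = u j)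
    (hwi : w i ∈ uIcc (u i) (v i)) : w ∈ segment ℝ u v := by
  rw [← segment_eq_uIcc] at hwi
  obtain ⟨a, b, ha, hb, hab, hcomb⟩ := hwi
  refine ⟨a, b, ha, hb, hab, ?_⟩
  ext j
  have hL : (a • u + b • v) j = a * u j + b * v j := rfl
  rw [hL]
  by_cases hj : j = i
  · subst hj; exact hcomb
  · rw [← huv j hj, hwu j hj]; linear_combination u j * hab

lemma coord_dist_le (u v : EucR 2) (j : Fin 2) : dist (u j) (v j) ≤ dist u v := by
  rw [EuclideanSpace.dist_eq]
  have h1 : dist (u j) (v j) = Real.sqrt (dist (u j) (v j) ^ 2) := by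
    rw [Real.sqrt_sq dist_nonneg]
  rw [h1]
  apply Real.sqrt_le_sqrt
  have := Finset.single_le_sum (f := fun i => dist (u i) (v i) ^ 2)
    (fun i _ => by positivity) (Finset.mem_univ j)
  simpa using this

/-- every edge that changes coordinate `c` satisfies the premise for `c`. -/
lemma edge_premise {d : ℕ} {x y : EucR d} (h : IsOrthSeg x y) {c : Fin d}
    (hc : x c ≠ y c) : ∀ j, j ≠ c → x j = y j := by
  obtain ⟨i, hi⟩ := h
  rcases eq_or_ne i c with rfl | hic
  · exact hi
  · exact absurd (hi c (Ne.symm hic)) hc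

lemma mono_or_anti {d : ℕ} {S : Set (EucR d)} {p : ℕ → EucR d} {n : ℕ}
    (hp : IsStaircaseIn S p n) (c : Fin d) :
    (∀ k, k < n → p k c ≤ p (k + 1) c) ∨ (∀ k, k < n → p (k + 1) c ≤ p k c) := by
  by_cases h : ∀ k, k < n → p k c ≤ p (k + 1) c
  · exact Or.inl h
  · push_neg at h
    obtain ⟨k0, hk0, hlt⟩ := h
    right
    intro k hk
    by_contra hcon
    push_neg at hcon
    have h1 : p k c ≠ p (k + 1) c := ne_of_lt hcon
    have h2 : p k0 c ≠ p (k0 + 1) c := fun h => absurd h.symm (ne_of_lt hlt)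
    have := hp.2 k hk k0 hk0 c (edge_premise (hp.1 k hk).1 h1) (edge_premise (hp.1 k0 hk0).1 h2)
    nlinarith

lemma chain_mono {f : ℕ → ℝ} {n : ℕ} (h : ∀ k, k < n → f k ≤ f (k + 1)) :
    ∀ k l, k ≤ l → l ≤ n → f k ≤ f l := by
  intro k l hkl hln
  induction l with
  | zero =>
    have hk : k = 0 := by omega
    subst hk; exact le_refl _
  | succ m ih =>
    rcases Nat.lt_or_ge k (m + 1) with h' | h'
    · exact le_trans (ih (by omega) (by omega)) (h m (by omega))
    · have hk : k = m + 1 := by omega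
      subst hk; exact le_refl _

lemma ivt_discrete (f : ℕ → ℝ) (n : ℕ) (hn : 0 < n) (t : ℝ) (ht : t ∈ uIcc (f 0) (f n)) :
    ∃ k, k < n ∧ t ∈ uIcc (f k) (f (k + 1)) := by
  induction n with
  | zero => omega
  | succ m ih =>
    rcases Nat.eq_zero_or_pos m with rfl | hm
    · exact ⟨0, by omega, ht⟩
    by_cases h : t ∈ uIcc (f 0) (f m)
    · obtain ⟨k, hk, hmem⟩ := ih hm h
      exact ⟨k, by omega, hmem⟩
    · refine ⟨m, by omega, ?_⟩
      rw [mem_uIcc] at ht h ⊢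
      push_neg at h
      rcases le_total (f m) t with h3 | h3
      · rcases ht with ⟨h1, h2⟩ | ⟨h1, h2⟩
        · exact Or.inl ⟨h3, h2⟩
        · exact Or.inl ⟨h3, by linarith [h.2 h3]⟩
      · rcases ht with ⟨h1, h2⟩ | ⟨h1, h2⟩
        · exact Or.inr ⟨by linarith [h.1 h1], h3⟩
        · exact Or.inr ⟨h1, h3⟩




lemma chain_anti {f : ℕ → ℝ} {n : ℕ} (h : ∀ k, k < n → f (k + 1) ≤ f k) :
    ∀ k l, k ≤ l → l ≤ n → f l ≤ f k := by
  intro k l hkl hln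
  have := chain_mono (f := fun j => -f j) (fun j hj => neg_le_neg (h j hj)) k l hkl hln
  simpa using this

lemma orthpath_mono {d : ℕ} {S T : Set (EucR d)} (hST : S ⊆ T) {p : ℕ → EucR d} {n : ℕ}
    (hp : IsOrthPathIn S p n) : IsOrthPathIn T p n :=
  fun k hk => ⟨(hp k hk).1, (hp k hk).2.trans hST⟩

lemma orthseg_symm {d : ℕ} {x y : EucR d} (h : IsOrthSeg x y) : IsOrthSeg y x := by
  obtain ⟨i, hi⟩ := h; exact ⟨i, fun j hj => (hi j hj).symm⟩

lemma orthpath_reverse {d : ℕ} {S : Set (EucR d)} {p : ℕ → EucR d} {n : ℕ}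
    (hp : IsOrthPathIn S p n) : IsOrthPathIn S (fun k => p (n - k)) n := by
  intro k hk
  have h1 : n - k = (n - (k + 1)) + 1 := by omega
  obtain ⟨hseg, hsub⟩ := hp (n - (k + 1)) (by omega)
  constructor
  · show IsOrthSeg (p (n - k)) (p (n - (k + 1)))
    rw [h1]; exact orthseg_symm hseg
  · show segment ℝ (p (n - k)) (p (n - (k + 1))) ⊆ S
    rw [h1, segment_symm]; exact hsub

lemma orthpath_concat {d : ℕ} {S : Set (EucR d)} {p q : ℕ → EucR d} {n l : ℕ}
    (hp : IsOrthPathIn S p n) (hq : IsOrthPathIn S q l) (hpq : p n = q 0) :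
    IsOrthPathIn S (fun k => if k ≤ n then p k else q (k - n)) (n + l) ∧
    (fun k => if k ≤ n then p k else q (k - n)) 0 = p 0 ∧
    (fun k => if k ≤ n then p k else q (k - n)) (n + l) = q l := by
  set r := fun k => if k ≤ n then p k else q (k - n) with hr
  have hrq : ∀ k, n ≤ k → r k = q (k - n) := by
    intro k hk
    rcases eq_or_lt_of_le hk with rfl | hlt
    · simp [hr, hpq]
    · simp [hr, Nat.not_le.mpr hlt]
  refine ⟨?_, by simp [hr], ?_⟩
  · intro k hk
    rcases Nat.lt_or_ge k n with h' | h'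
    · have e1 : r k = p k := by simp [hr, le_of_lt h']
      have e2 : r (k + 1) = p (k + 1) := by simp [hr, Nat.succ_le_of_lt h']
      rw [e1, e2]; exact hp k h'
    · have e1 : r k = q (k - n) := hrq k h'
      have harg : k + 1 - n = k - n + 1 := by omega
      have e2 : r (k + 1) = q (k - n + 1) := by rw [hrq (k + 1) (by omega), harg]
      rw [e1, e2]
      exact hq (k - n) (by omega)
  · have harg : n + l - n = l := by omega
    rw [hrq (n + l) (by omega), harg]

lemma stair_append {S : Set (EucR 2)} (hconv : OrthConvex S)
    {γ : ℕ → EucR 2} {m : ℕ} (hγ : IsStaircaseIn S γ m)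
    {b : EucR 2} (hseg : IsOrthSeg (γ m) b) (hsub : segment ℝ (γ m) b ⊆ S) :
    ∃ γ' : ℕ → EucR 2, ∃ m' : ℕ, γ' 0 = γ 0 ∧ γ' m' = b ∧ IsStaircaseIn S γ' m' := by
  obtain ⟨i, hi⟩ := hseg
  obtain ⟨o, hoi, hcov⟩ : ∃ o : Fin 2, o ≠ i ∧ ∀ j : Fin 2, j ≠ i → j = o := by
    fin_cases i
    · exact ⟨1, by decide, by decide⟩
    · exact ⟨0, by decide, by decide⟩
  by_cases hA : ∀ k, k < m → 0 ≤ (γ (k + 1) i - γ k i) * (b i - γ m i)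
  · -- simply append the new edge
    set γ' := fun k => if k ≤ m then γ k else b with hγ'
    have e1 : ∀ k, k ≤ m → γ' k = γ k := fun k hk => by simp [hγ', hk]
    have e2 : γ' (m + 1) = b := by simp [hγ']
    refine ⟨γ', m + 1, e1 0 (by omega), e2, ?_, ?_⟩
    · intro k hk
      rcases Nat.lt_or_ge k m with h' | h'
      · rw [e1 k (by omega), e1 (k + 1) (by omega)]; exact hγ.1 k h'
      · have hkm : k = m := by omega
        subst hkm
        rw [e1 k le_rfl, e2]
        exact ⟨⟨i, hi⟩, hsub⟩
    · intro k' hk' l' hl' c P1 P2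
      rcases Nat.lt_or_ge k' m with h1 | h1 <;> rcases Nat.lt_or_ge l' m with h2 | h2
      · simp only [e1 k' (by omega), e1 (k' + 1) (by omega), e1 l' (by omega),
          e1 (l' + 1) (by omega)] at P1 P2 ⊢
        exact hγ.2 k' h1 l' h2 c P1 P2
      · have hlm : l' = m := by omega
        simp only [hlm, e1 k' (by omega), e1 (k' + 1) (by omega), e1 m le_rfl, e2]
        rcases eq_or_ne c i with rfl | hci
        · exact hA k' h1
        · have h0 : b c - γ m c = 0 := by rw [← hi c hci]; ring
          rw [h0, mul_zero]
      · have hkm : k' = m := by omega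
        simp only [hkm, e1 l' (by omega), e1 (l' + 1) (by omega), e1 m le_rfl, e2]
        rcases eq_or_ne c i with rfl | hci
        · rw [mul_comm]; exact hA l' h2
        · have h0 : b c - γ m c = 0 := by rw [← hi c hci]; ring
          rw [h0, zero_mul]
      · have hkm : k' = m := by omega
        have hlm : l' = m := by omega
        simp only [hkm, hlm, e1 m le_rfl, e2]
        exact mul_self_nonneg _
  · -- conflict case
    push_neg at hA
    obtain ⟨k0, hk0m, hk0⟩ := hA
    have hm : 0 < m := by omega
    have hxS : γ 0 ∈ S := (hγ.1 0 hm).2 (left_mem_segment ℝ _ _)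
    have haS : γ m ∈ S := hsub (left_mem_segment ℝ _ _)
    have hbS : b ∈ S := hsub (right_mem_segment ℝ _ _)
    have hmono := mono_or_anti hγ
    have hkey : (γ 0 i ≤ γ m i ∧ b i < γ m i) ∨ (γ m i ≤ γ 0 i ∧ γ m i < b i) := by
      rcases hmono i with hup | hdn
      · left
        refine ⟨chain_mono (f := fun j => γ j i) hup 0 m (by omega) le_rfl, ?_⟩
        nlinarith [hup k0 hk0m]
      · right
        refine ⟨chain_anti (f := fun j => γ j i) hdn 0 m (by omega) le_rfl, ?_⟩
        nlinarith [hdn k0 hk0m]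
    have hdisj : b i ∈ uIcc (γ 0 i) (γ m i) ∨ γ 0 i ∈ uIcc (γ m i) (b i) := by
      rw [mem_uIcc, mem_uIcc]
      rcases hkey with ⟨h1, h2⟩ | ⟨h1, h2⟩
      · rcases le_total (γ 0 i) (b i) with h3 | h3
        · exact Or.inl (Or.inl ⟨h3, le_of_lt h2⟩)
        · exact Or.inr (Or.inr ⟨h3, h1⟩)
      · rcases le_total (b i) (γ 0 i) with h3 | h3
        · exact Or.inl (Or.inr ⟨le_of_lt h2, h3⟩)
        · exact Or.inr (Or.inl ⟨h1, h3⟩)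
    rcases hdisj with hB1 | hB2
    · -- b i lies between γ 0 i and γ m i : truncate the staircase
      obtain ⟨k, hkm, hbk⟩ := ivt_discrete (fun j => γ j i) m hm (b i) hB1
      set q : EucR 2 := WithLp.toLp 2 (fun j => if j = i then b i else γ k j : Fin 2 → ℝ) with hqdef
      have hqi : q i = b i := by simp [hqdef]
      have hqoff : ∀ j, j ≠ i → q j = γ k j := fun j hj => by simp [hqdef, hj]
      have hqseg : q ∈ segment ℝ (γ k) (γ (k + 1)) := by
        rcases eq_or_ne (γ k i) (γ (k + 1) i) with heq | hne
        · have hbq : b i = γ k i := by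
            rw [mem_uIcc] at hbk
            rcases hbk with ⟨u1, u2⟩ | ⟨u1, u2⟩ <;> [skip; rw [heq]] <;>
              simp only [heq] at u1 u2 <;> linarith
          have hqγ : q = γ k := by
            ext j
            by_cases hj : j = i
            · subst hj; rw [hqi, hbq]
            · exact hqoff j hj
          rw [hqγ]; exact left_mem_segment ℝ _ _
        · exact mem_segment_of_coord (edge_premise (hγ.1 k hkm).1 hne)
            hqoff (by rw [hqi]; exact hbk)
      have hqS : q ∈ S := (hγ.1 k hkm).2 hqseg
      set γ' := fun j => if j ≤ k then γ j else if j = k + 1 then q else b with hγ'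
      have e1 : ∀ j, j ≤ k → γ' j = γ j := fun j hj => by simp [hγ', hj]
      have e2 : γ' (k + 1) = q := by simp [hγ']
      have e3 : γ' (k + 2) = b := by
        have : ¬(k + 2 ≤ k) := by omega
        simp [hγ', this]
      -- auxiliary sign facts
      have hQ : ∀ c : Fin 2, ∀ k', k' < k → 0 ≤ (γ (k' + 1) c - γ k' c) * (q c - γ k c) := by
        intro c k' hk'
        rcases eq_or_ne c i with rfl | hci
        · rw [hqi]
          rw [mem_uIcc] at hbk
          rcases hmono c with hup | hdn
          · have h1 : 0 ≤ γ (k' + 1) c - γ k' c := by linarith [hup k' (by omega)]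
            have h2 : 0 ≤ b c - γ k c := by
              rcases hbk with ⟨u1, u2⟩ | ⟨u1, u2⟩ <;> [linarith; linarith [hup k hkm]]
            positivity
          · have h1 : γ (k' + 1) c - γ k' c ≤ 0 := by linarith [hdn k' (by omega)]
            have h2 : b c - γ k c ≤ 0 := by
              rcases hbk with ⟨u1, u2⟩ | ⟨u1, u2⟩ <;> [linarith [hdn k hkm]; linarith]
            nlinarith
        · rw [hqoff c hci]; simp
      have hLast : ∀ c : Fin 2, ∀ k', k' ≤ k → 0 ≤ (γ (k' + 1) c - γ k' c) * (b c - q c) := by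
        intro c k' hk'
        rcases eq_or_ne c i with rfl | hci
        · rw [hqi]; simp
        · rw [hqoff c hci, ← hi c hci]
          rcases hmono c with hup | hdn
          · have h1 : 0 ≤ γ (k' + 1) c - γ k' c := by linarith [hup k' (by omega)]
            have h2 : 0 ≤ γ m c - γ k c := by
              have := chain_mono (f := fun j => γ j c) hup k m (by omega) le_rfl
              linarith
            positivity
          · have h1 : γ (k' + 1) c - γ k' c ≤ 0 := by linarith [hdn k' (by omega)]
            have h2 : γ m c - γ k c ≤ 0 := by
              have := chain_anti (f := fun j => γ j c) hdn k m (by omega) le_rfl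
              linarith
            nlinarith
      have hQLast : ∀ c : Fin 2, 0 ≤ (q c - γ k c) * (b c - q c) := by
        intro c
        rcases eq_or_ne c i with rfl | hci
        · rw [hqi]; simp
        · rw [hqoff c hci]; simp
      refine ⟨γ', k + 2, e1 0 (by omega), e3, ?_, ?_⟩
      · intro j hj
        rcases Nat.lt_or_ge j k with h' | h'
        · rw [e1 j (by omega), e1 (j + 1) (by omega)]
          exact hγ.1 j (by omega)
        · rcases Nat.eq_or_lt_of_le h' with heq | h''
          · have hjk : j = k := heq.symm
            subst hjk
            rw [e1 j le_rfl, e2]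
            refine ⟨⟨i, fun j' hj' => (hqoff j' hj').symm⟩, ?_⟩
            exact ((convex_segment (γ j) (γ (j + 1))).segment_subset
              (left_mem_segment ℝ _ _) hqseg).trans (hγ.1 j hkm).2
          · have hjk : j = k + 1 := by omega
            subst hjk
            rw [e2, e3]
            have hqb : ∀ j', j' ≠ o → q j' = b j' := by
              intro j' hj'
              by_cases h : j' = i
              · subst h; exact hqi
              · exact absurd (hcov j' h) hj'
            exact ⟨⟨o, hqb⟩, hconv _ hqS _ hbS ⟨o, hqb⟩⟩
      · intro k' hk' l' hl' c P1 P2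
        have ecase : ∀ j, j < k + 2 → j < k ∨ j = k ∨ j = k + 1 := by omega
        rcases ecase k' hk' with h1 | h1 | h1 <;> rcases ecase l' hl' with h2 | h2 | h2
        · simp only [e1 k' (by omega), e1 (k' + 1) (by omega), e1 l' (by omega),
            e1 (l' + 1) (by omega)] at P1 P2 ⊢
          exact hγ.2 k' (by omega) l' (by omega) c P1 P2
        · simp only [h2, e1 k' (by omega), e1 (k' + 1) (by omega), e1 k le_rfl, e2]
          exact hQ c k' h1
        · simp only [h2, e1 k' (by omega), e1 (k' + 1) (by omega), e2, e3]
          exact hLast c k' (by omega)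
        · simp only [h1, e1 l' (by omega), e1 (l' + 1) (by omega), e1 k le_rfl, e2]
          rw [mul_comm]; exact hQ c l' h2
        · simp only [h1, h2, e1 k le_rfl, e2]
          exact mul_self_nonneg _
        · simp only [h1, h2, e1 k le_rfl, e2, e3]
          exact hQLast c
        · simp only [h1, e1 l' (by omega), e1 (l' + 1) (by omega), e2, e3]
          rw [mul_comm]; exact hLast c l' (by omega)
        · simp only [h1, h2, e1 k le_rfl, e2, e3]
          rw [mul_comm]; exact hQLast c
        · simp only [h1, h2, e2, e3]
          exact mul_self_nonneg _
    · -- b i beyond γ 0 i : two-edge path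
      set w : EucR 2 := WithLp.toLp 2 (fun j => if j = i then γ 0 i else γ m j : Fin 2 → ℝ) with hwdef
      have hwi : w i = γ 0 i := by simp [hwdef]
      have hwoff : ∀ j, j ≠ i → w j = γ m j := fun j hj => by simp [hwdef, hj]
      have hwseg : w ∈ segment ℝ (γ m) b :=
        mem_segment_of_coord hi hwoff (by rw [hwi]; exact hB2)
      have hwS : w ∈ S := hsub hwseg
      set p' := fun j => if j = 0 then γ 0 else if j = 1 then w else b with hp'
      have f0 : p' 0 = γ 0 := by simp [hp']
      have f1 : p' 1 = w := by simp [hp']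
      have f2 : p' 2 = b := by simp [hp']
      refine ⟨p', 2, f0, f2, ?_, ?_⟩
      · intro j hj
        have hxw : ∀ j', j' ≠ o → γ 0 j' = w j' := by
          intro j' hj'
          by_cases h : j' = i
          · subst h; exact hwi.symm
          · exact absurd (hcov j' h) hj'
        interval_cases j
        · rw [f0, f1]
          exact ⟨⟨o, hxw⟩, hconv _ hxS _ hwS ⟨o, hxw⟩⟩
        · rw [f1, f2]
          have hwb : ∀ j', j' ≠ i → w j' = b j' := fun j' hj' => by
            rw [hwoff j' hj', hi j' hj']
          refine ⟨⟨i, hwb⟩, ?_⟩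
          exact ((convex_segment (γ m) b).segment_subset hwseg
            (right_mem_segment ℝ _ _)).trans hsub
      · intro k hk l hl c P1 P2
        have hfac0 : ∀ c : Fin 2, c = i → p' 1 c - p' 0 c = 0 := by
          intro c hc; subst hc; rw [f0, f1, hwi]; ring
        have hfac1 : ∀ c : Fin 2, c ≠ i → p' 2 c - p' 1 c = 0 := by
          intro c hc; rw [f1, f2, hwoff c hc, hi c hc]; ring
        interval_cases k <;> interval_cases l
        · exact mul_self_nonneg _
        · rcases eq_or_ne c i with rfl | hci
          · rw [hfac0 c rfl, zero_mul]
          · rw [hfac1 c hci, mul_zero]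
        · rcases eq_or_ne c i with rfl | hci
          · rw [hfac0 c rfl, mul_zero]
          · rw [hfac1 c hci, zero_mul]
        · exact mul_self_nonneg _

lemma fin2_one_of_ne_zero {j : Fin 2} (h : j ≠ 0) : j = 1 := by omega
lemma fin2_zero_of_ne_one {j : Fin 2} (h : j ≠ 1) : j = 0 := by omega

lemma staircase_of_orthpath {S : Set (EucR 2)} (hconv : OrthConvex S)
    {p : ℕ → EucR 2} {n : ℕ} (hp : IsOrthPathIn S p n) :
    ∃ γ : ℕ → EucR 2, ∃ m : ℕ, γ 0 = p 0 ∧ γ m = p n ∧ IsStaircaseIn S γ m := by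
  induction n with
  | zero =>
    exact ⟨p, 0, rfl, rfl, fun k hk => absurd hk (by omega),
      fun k hk => absurd hk (by omega)⟩
  | succ n ih =>
    obtain ⟨γ, m, h0, hm, hγ⟩ := ih (fun k hk => hp k (by omega))
    obtain ⟨hseg, hsub⟩ := hp n (by omega)
    rw [← hm] at hseg hsub
    obtain ⟨γ', m', h0', hm', hγ'⟩ := stair_append hconv hγ hseg hsub
    exact ⟨γ', m', h0'.trans h0, hm', hγ'⟩

lemma ball_path {y y' : EucR 2} {ε : ℝ} (hy' : y' ∈ Metric.ball y ε) :
    ∃ p : ℕ → EucR 2, p 0 = y ∧ p 2 = y' ∧ IsOrthPathIn (Metric.ball y ε) p 2 := by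
  have hεpos : 0 < ε := lt_of_le_of_lt dist_nonneg (Metric.mem_ball.mp hy')
  have hyball : y ∈ Metric.ball y ε := Metric.mem_ball_self hεpos
  set c : EucR 2 := pt2 (y' 0) (y 1) with hc
  have hcy : dist c y ≤ dist y' y := by
    rw [EuclideanSpace.dist_eq, EuclideanSpace.dist_eq]
    apply Real.sqrt_le_sqrt
    rw [Fin.sum_univ_two, Fin.sum_univ_two]
    have h1 : dist (c 0) (y 0) = dist (y' 0) (y 0) := rfl
    have h2 : dist (c 1) (y 1) = 0 := dist_self _
    rw [h1, h2]
    nlinarith [dist_nonneg (x := y' 1) (y := y 1), dist_nonneg (x := y' 0) (y := y 0)]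
  have hcball : c ∈ Metric.ball y ε :=
    Metric.mem_ball.mpr (lt_of_le_of_lt hcy (Metric.mem_ball.mp hy'))
  set p := fun j : ℕ => if j = 0 then y else if j = 1 then c else y' with hp
  have f0 : p 0 = y := by simp [hp]
  have f1 : p 1 = c := by simp [hp]
  have f2 : p 2 = y' := by simp [hp]
  refine ⟨p, f0, f2, ?_⟩
  intro j hj
  have hyc : ∀ j', j' ≠ (0 : Fin 2) → y j' = c j' := by
    intro j' hj'
    rw [fin2_one_of_ne_zero hj']; rfl
  have hcy' : ∀ j', j' ≠ (1 : Fin 2) → c j' = y' j' := by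
    intro j' hj'
    rw [fin2_zero_of_ne_one hj']; rfl
  interval_cases j
  · rw [f0, f1]
    exact ⟨⟨0, hyc⟩, (convex_ball y ε).segment_subset hyball hcball⟩
  · rw [f1, f2]
    exact ⟨⟨1, hcy'⟩, (convex_ball y ε).segment_subset hcball hy'⟩

lemma open_connected_orthconn {U : Set (EucR 2)} (hU : IsOpen U) (hc : IsPreconnected U)
    {x : EucR 2} (hx : x ∈ U) {y : EucR 2} (hy : y ∈ U) :
    ∃ n : ℕ, ∃ p : ℕ → EucR 2, p 0 = x ∧ p n = y ∧ IsOrthPathIn U p n := by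
  set A := {z : EucR 2 | z ∈ U ∧ ∃ n : ℕ, ∃ p : ℕ → EucR 2,
    p 0 = x ∧ p n = z ∧ IsOrthPathIn U p n} with hA
  set B := {z : EucR 2 | z ∈ U ∧ ¬∃ n : ℕ, ∃ p : ℕ → EucR 2,
    p 0 = x ∧ p n = z ∧ IsOrthPathIn U p n} with hB
  have hAopen : IsOpen A := by
    rw [Metric.isOpen_iff]
    rintro z ⟨hzU, n, p, hp0, hpn, hp⟩
    obtain ⟨ε, hεpos, hball⟩ := Metric.isOpen_iff.mp hU z hzU
    refine ⟨ε, hεpos, fun z' hz' => ⟨hball hz', ?_⟩⟩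
    obtain ⟨q, hq0, hq2, hq⟩ := ball_path hz'
    have hq' : IsOrthPathIn U q 2 := orthpath_mono hball hq
    rw [← hpn] at hq0
    obtain ⟨hr, hr0, hrend⟩ := orthpath_concat hp hq' hq0.symm
    exact ⟨n + 2, fun k => if k ≤ n then p k else q (k - n), hr0.trans hp0, hrend.trans hq2, hr⟩
  have hBopen : IsOpen B := by
    rw [Metric.isOpen_iff]
    rintro z ⟨hzU, hzn⟩
    obtain ⟨ε, hεpos, hball⟩ := Metric.isOpen_iff.mp hU z hzU
    refine ⟨ε, hεpos, fun z' hz' => ⟨hball hz', fun hreach => hzn ?_⟩⟩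
    obtain ⟨n, p, hp0, hpn, hp⟩ := hreach
    obtain ⟨q, hq0, hq2, hq⟩ := ball_path hz'
    have hqrev := orthpath_reverse hq
    have hqrev' : IsOrthPathIn U (fun k => q (2 - k)) 2 := orthpath_mono hball hqrev
    have hj : p n = (fun k => q (2 - k)) 0 := by simp [hq2, hpn]
    obtain ⟨hr, hr0, hrend⟩ := orthpath_concat hp hqrev' hj
    have h22 : q (2 - 2) = z := by simpa using hq0
    exact ⟨n + 2, fun k => if k ≤ n then p k else (fun k => q (2 - k)) (k - n), hr0.trans hp0, hrend.trans h22, hr⟩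
  have hxA : x ∈ A := ⟨hx, 0, fun _ => x, rfl, rfl, fun k hk => absurd hk (by omega)⟩
  by_contra hny
  have hyB : y ∈ B := ⟨hy, fun h => hny h⟩
  have hcover : U ⊆ A ∪ B := by
    intro z hz
    by_cases h : ∃ n : ℕ, ∃ p : ℕ → EucR 2, p 0 = x ∧ p n = z ∧ IsOrthPathIn U p n
    · exact Or.inl ⟨hz, h⟩
    · exact Or.inr ⟨hz, h⟩
  obtain ⟨w, hwU, hwA, hwB⟩ := hc A B hAopen hBopen hcover ⟨x, hx, hxA⟩ ⟨y, hy, hyB⟩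
  exact hwB.2 hwA.2

lemma escape_of_seg {S : Set (EucR 2)} (hcl : S = closure (interior S))
    (hconv : OrthConvex S) {x y : EucR 2} {i : Fin 2} (hxy : x ≠ y)
    (hi : ∀ j, j ≠ i → x j = y j) (hseg : segment ℝ x y ⊆ S) :
    ∃ n : ℕ, ∃ p : ℕ → EucR 2, p 0 = x ∧ p n ∈ interior S ∧ IsOrthPathIn S p n := by
  obtain ⟨o, hoi, hcov⟩ : ∃ o : Fin 2, o ≠ i ∧ ∀ j : Fin 2, j ≠ i → j = o := by
    fin_cases i
    · exact ⟨1, by decide, by decide⟩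
    · exact ⟨0, by decide, by decide⟩
  have hxS : x ∈ S := hseg (left_mem_segment ℝ x y)
  have hine : x i ≠ y i := by
    intro h
    apply hxy
    ext j
    by_cases hj : j = i
    · subst hj; exact h
    · exact hi j hj
  set m : EucR 2 := WithLp.toLp 2 (fun j => if j = i then (x i + y i) / 2 else x j : Fin 2 → ℝ) with hm
  have hmi : m i = (x i + y i) / 2 := by simp [hm]
  have hmoff : ∀ j, j ≠ i → m j = x j := fun j hj => by simp [hm, hj]
  have hmseg : m ∈ segment ℝ x y := by
    apply mem_segment_of_coord hi hmoff
    rw [hmi, mem_uIcc]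
    rcases le_total (x i) (y i) with h | h
    · exact Or.inl ⟨by linarith, by linarith⟩
    · exact Or.inr ⟨by linarith, by linarith⟩
  have hmS : m ∈ S := hseg hmseg
  set r := |y i - x i| / 2 with hr
  have hrpos : 0 < r := by
    rw [hr]
    have := abs_pos.mpr (sub_ne_zero.mpr (Ne.symm hine))
    linarith
  have hmcl : m ∈ closure (interior S) := by rw [← hcl]; exact hmS
  obtain ⟨z, hzint, hzd⟩ := Metric.mem_closure_iff.mp hmcl r hrpos
  have hzi : |z i - m i| < r := by
    have h1 := coord_dist_le m z i
    rw [Real.dist_eq] at h1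
    rw [abs_sub_comm]
    calc |m i - z i| ≤ dist m z := h1
    _ < r := hzd
  have hzmem : z i ∈ uIcc (x i) (y i) := by
    rw [mem_uIcc]
    have h2 := abs_lt.mp hzi
    rw [hr, hmi] at h2
    rcases le_total (x i) (y i) with h | h
    · left
      rw [abs_of_nonneg (show (0:ℝ) ≤ y i - x i by linarith)] at h2
      constructor <;> linarith [h2.1, h2.2]
    · right
      rw [abs_of_nonpos (show y i - x i ≤ (0:ℝ) by linarith)] at h2
      constructor <;> linarith [h2.1, h2.2]
  set w : EucR 2 := WithLp.toLp 2 (fun j => if j = i then z i else x j : Fin 2 → ℝ) with hw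
  have hwi : w i = z i := by simp [hw]
  have hwoff : ∀ j, j ≠ i → w j = x j := fun j hj => by simp [hw, hj]
  have hwseg : w ∈ segment ℝ x y := mem_segment_of_coord hi hwoff (by rw [hwi]; exact hzmem)
  have hwS : w ∈ S := hseg hwseg
  have hzS : z ∈ S := interior_subset hzint
  set p := fun j : ℕ => if j = 0 then x else if j = 1 then w else z with hp
  have f0 : p 0 = x := by simp [hp]
  have f1 : p 1 = w := by simp [hp]
  have f2 : p 2 = z := by simp [hp]
  refine ⟨2, p, f0, by rw [f2]; exact hzint, ?_⟩
  intro j hj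
  have hxw : ∀ j', j' ≠ i → x j' = w j' := fun j' hj' => (hwoff j' hj').symm
  have hwz : ∀ j', j' ≠ o → w j' = z j' := by
    intro j' hj'
    by_cases h : j' = i
    · subst h; exact hwi
    · exact absurd (hcov j' h) hj'
  interval_cases j
  · rw [f0, f1]
    refine ⟨⟨i, hxw⟩, ?_⟩
    exact ((convex_segment x y).segment_subset (left_mem_segment ℝ x y) hwseg).trans hseg
  · rw [f1, f2]
    exact ⟨⟨o, hwz⟩, hconv _ hwS _ hzS ⟨o, hwz⟩⟩


lemma seg_of_section_h {S : Set (EucR 2)} {a b x1 : ℝ}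
    (h : ∀ t ∈ uIcc a b, pt2 t x1 ∈ S) : segment ℝ (pt2 a x1) (pt2 b x1) ⊆ S := by
  intro z hz
  have h1 : z 1 = x1 := by
    have h1' : z 1 ∈ uIcc x1 x1 := coord_mem_uIcc hz 1
    simpa using h1'
  have h0 : z 0 ∈ uIcc a b := coord_mem_uIcc hz 0
  have hmem := h (z 0) h0
  rw [← h1] at hmem
  rwa [pt2_eta z] at hmem

lemma seg_of_section_v {S : Set (EucR 2)} {a b x0 : ℝ}
    (h : ∀ t ∈ uIcc a b, pt2 x0 t ∈ S) : segment ℝ (pt2 x0 a) (pt2 x0 b) ⊆ S := by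
  intro z hz
  have h1 : z 0 = x0 := by
    have h1' : z 0 ∈ uIcc x0 x0 := coord_mem_uIcc hz 0
    simpa using h1'
  have h0 : z 1 ∈ uIcc a b := coord_mem_uIcc hz 1
  have hmem := h (z 1) h0
  rw [← h1] at hmem
  rwa [pt2_eta z] at hmem

lemma escape_h {S : Set (EucR 2)} (hcl : S = closure (interior S)) (hconv : OrthConvex S)
    {x : EucR 2} (hx : x ∈ S) (hh : hw S x ≠ 0) :
    ∃ n : ℕ, ∃ p : ℕ → EucR 2, p 0 = x ∧ p n ∈ interior S ∧ IsOrthPathIn S p n := by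
  have hx0 : x 0 ∈ {t : ℝ | pt2 t (x 1) ∈ S} := by
    show pt2 (x 0) (x 1) ∈ S
    rw [pt2_eta]; exact hx
  have hCnt : (connectedComponentIn {t : ℝ | pt2 t (x 1) ∈ S} (x 0)).Nontrivial := by
    rw [← Set.not_subsingleton_iff]
    intro hsub
    exact hh (hsub.measure_zero volume)
  obtain ⟨t, htC, htne⟩ := hCnt.exists_ne (x 0)
  have hC : uIcc (x 0) t ⊆ {t : ℝ | pt2 t (x 1) ∈ S} :=
    (isPreconnected_connectedComponentIn.ordConnected.uIcc_subset
      (mem_connectedComponentIn hx0) htC).trans (connectedComponentIn_subset _ _)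
  have hxyne : x ≠ pt2 t (x 1) := by
    intro h
    exact htne (congrArg (fun v : EucR 2 => v 0) h).symm
  have hij : ∀ j, j ≠ (0 : Fin 2) → x j = pt2 t (x 1) j := by
    intro j hj
    rw [fin2_one_of_ne_zero hj]; rfl
  have hseg : segment ℝ x (pt2 t (x 1)) ⊆ S := by
    have := seg_of_section_h (fun s hs => hC hs)
    rwa [pt2_eta x] at this
  exact escape_of_seg hcl hconv hxyne hij hseg

lemma escape_v {S : Set (EucR 2)} (hcl : S = closure (interior S)) (hconv : OrthConvex S)
    {x : EucR 2} (hx : x ∈ S) (hh : vw S x ≠ 0) :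
    ∃ n : ℕ, ∃ p : ℕ → EucR 2, p 0 = x ∧ p n ∈ interior S ∧ IsOrthPathIn S p n := by
  have hx0 : x 1 ∈ {t : ℝ | pt2 (x 0) t ∈ S} := by
    show pt2 (x 0) (x 1) ∈ S
    rw [pt2_eta]; exact hx
  have hCnt : (connectedComponentIn {t : ℝ | pt2 (x 0) t ∈ S} (x 1)).Nontrivial := by
    rw [← Set.not_subsingleton_iff]
    intro hsub
    exact hh (hsub.measure_zero volume)
  obtain ⟨t, htC, htne⟩ := hCnt.exists_ne (x 1)
  have hC : uIcc (x 1) t ⊆ {t : ℝ | pt2 (x 0) t ∈ S} :=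
    (isPreconnected_connectedComponentIn.ordConnected.uIcc_subset
      (mem_connectedComponentIn hx0) htC).trans (connectedComponentIn_subset _ _)
  have hxyne : x ≠ pt2 (x 0) t := by
    intro h
    exact htne (congrArg (fun v : EucR 2 => v 1) h).symm
  have hij : ∀ j, j ≠ (1 : Fin 2) → x j = pt2 (x 0) t j := by
    intro j hj
    rw [fin2_zero_of_ne_one hj]; rfl
  have hseg : segment ℝ x (pt2 (x 0) t) ⊆ S := by
    have := seg_of_section_v (fun s hs => hC hs)
    rwa [pt2_eta x] at this
  exact escape_of_seg hcl hconv hxyne hij hseg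

lemma width_pos_h {S : Set (EucR 2)} {x e : EucR 2} (hsub : segment ℝ x e ⊆ S)
    (hi : ∀ j, j ≠ (0 : Fin 2) → x j = e j) (hne : x 0 ≠ e 0) : hw S x ≠ 0 := by
  have hsubA : uIcc (x 0) (e 0) ⊆ {t : ℝ | pt2 t (x 1) ∈ S} := by
    intro s hs
    show pt2 s (x 1) ∈ S
    apply hsub
    refine mem_segment_of_coord (i := (0 : Fin 2)) hi ?_ hs
    intro j hj
    rw [fin2_one_of_ne_zero hj]
    rfl
  have hcc : uIcc (x 0) (e 0) ⊆ connectedComponentIn {t : ℝ | pt2 t (x 1) ∈ S} (x 0) :=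
    isPreconnected_uIcc.subset_connectedComponentIn left_mem_uIcc hsubA
  intro h0
  have hle : volume (uIcc (x 0) (e 0)) = 0 := by
    have := measure_mono (μ := volume) hcc
    rw [show volume (connectedComponentIn {t : ℝ | pt2 t (x 1) ∈ S} (x 0)) = 0 from h0] at this
    exact le_antisymm this zero_le
  rcases le_total (x 0) (e 0) with h | h
  · rw [uIcc_of_le h, Real.volume_Icc] at hle
    have := ENNReal.ofReal_eq_zero.mp hle
    have : x 0 = e 0 := by linarith
    exact hne this
  · rw [uIcc_of_ge h, Real.volume_Icc] at hle
    have := ENNReal.ofReal_eq_zero.mp hle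
    have : x 0 = e 0 := by linarith
    exact hne this

lemma width_pos_v {S : Set (EucR 2)} {x e : EucR 2} (hsub : segment ℝ x e ⊆ S)
    (hi : ∀ j, j ≠ (1 : Fin 2) → x j = e j) (hne : x 1 ≠ e 1) : vw S x ≠ 0 := by
  have hsubA : uIcc (x 1) (e 1) ⊆ {t : ℝ | pt2 (x 0) t ∈ S} := by
    intro s hs
    show pt2 (x 0) s ∈ S
    apply hsub
    refine mem_segment_of_coord (i := (1 : Fin 2)) hi ?_ hs
    intro j hj
    rw [fin2_zero_of_ne_one hj]
    rfl
  have hcc : uIcc (x 1) (e 1) ⊆ connectedComponentIn {t : ℝ | pt2 (x 0) t ∈ S} (x 1) :=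
    isPreconnected_uIcc.subset_connectedComponentIn left_mem_uIcc hsubA
  intro h0
  have hle : volume (uIcc (x 1) (e 1)) = 0 := by
    have := measure_mono (μ := volume) hcc
    rw [show volume (connectedComponentIn {t : ℝ | pt2 (x 0) t ∈ S} (x 1)) = 0 from h0] at this
    exact le_antisymm this zero_le
  rcases le_total (x 1) (e 1) with h | h
  · rw [uIcc_of_le h, Real.volume_Icc] at hle
    have := ENNReal.ofReal_eq_zero.mp hle
    have : x 1 = e 1 := by linarith
    exact hne this
  · rw [uIcc_of_ge h, Real.volume_Icc] at hle
    have := ENNReal.ofReal_eq_zero.mp hle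
    have : x 1 = e 1 := by linarith
    exact hne this

theorem main_thm (S : Set (EucR 2))
    (hcl : S = closure (interior S)) (hconn : IsConnected (interior S))
    (hcomp : IsCompact S) :
    StaircaseConnected S ↔
      (OrthConvex S ∧ ∀ x ∈ S, hw S x ≠ 0 ∨ vw S x ≠ 0) := by
  constructor
  · intro hst
    constructor
    · -- orthogonal convexity
      intro u hu v hv hseg z hz
      obtain ⟨n, p, h0, hn, hp⟩ := hst u hu v hv
      obtain ⟨i, hi⟩ := hseg
      have hvert : ∀ j, j ≠ i → ∀ k, k ≤ n → p k j = u j := by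
        intro j hj k hk
        have e0 : p 0 j = u j := by rw [h0]
        have en : p n j = u j := by rw [hn, ← hi j hj]
        rcases mono_or_anti hp j with hup | hdn
        · have h1 := chain_mono (f := fun k => p k j) hup 0 k (by omega) hk
          have h2 := chain_mono (f := fun k => p k j) hup k n hk le_rfl
          simp only at h1 h2
          linarith
        · have h1 := chain_anti (f := fun k => p k j) hdn 0 k (by omega) hk
          have h2 := chain_anti (f := fun k => p k j) hdn k n hk le_rfl
          simp only at h1 h2
          linarith
      rcases Nat.eq_zero_or_pos n with hn0 | hn0
      · subst hn0
        have huv : u = v := h0.symm.trans hn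
        rw [← huv, segment_same] at hz
        rw [hz]
        exact hu
      · have hz_i : z i ∈ uIcc (p 0 i) (p n i) := by
          have := coord_mem_uIcc hz i
          rwa [← h0, ← hn] at this
        obtain ⟨k, hk, hzk⟩ := ivt_discrete (fun k => p k i) n hn0 (z i) hz_i
        apply (hp.1 k hk).2
        refine mem_segment_of_coord (i := i) ?_ ?_ hzk
        · intro j hj
          rw [hvert j hj k (by omega), hvert j hj (k + 1) (by omega)]
        · intro j hj
          have hzj := coord_mem_uIcc hz j
          rw [← hi j hj] at hzj
          simp only [uIcc_self, mem_singleton_iff] at hzj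
          rw [hzj, hvert j hj k (by omega)]
    · -- widths
      intro x hx
      by_contra hcon
      push_neg at hcon
      obtain ⟨hh, hv⟩ := hcon
      have hxcl : x ∈ closure (interior S) := by rw [← hcl]; exact hx
      have hone : (interior S).Nonempty := by
        by_contra hne
        rw [Set.not_nonempty_iff_eq_empty] at hne
        rw [hne, closure_empty] at hxcl
        exact hxcl
      obtain ⟨z, hz⟩ := hone
      obtain ⟨y, hyS, hyne⟩ : ∃ y, y ∈ S ∧ y ≠ x := by
        rcases eq_or_ne z x with hzx | hzx
        · have hxint : x ∈ interior S := hzx ▸ hz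
          obtain ⟨ε, hεpos, hball⟩ := Metric.isOpen_iff.mp isOpen_interior x hxint
          set y : EucR 2 := WithLp.toLp 2 (fun j => if j = 0 then x 0 + ε / 2 else x j : Fin 2 → ℝ) with hy
          have hy0 : y 0 = x 0 + ε / 2 := by simp [hy]
          have hy1 : y 1 = x 1 := by simp [hy]
          have hdist : dist y x < ε := by
            rw [EuclideanSpace.dist_eq, Fin.sum_univ_two]
            have h1 : dist (y 0) (x 0) = ε / 2 := by
              rw [hy0, Real.dist_eq, show x 0 + ε / 2 - x 0 = ε / 2 by ring]
              exact abs_of_pos (by linarith)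
            have h2 : dist (y 1) (x 1) = 0 := by rw [hy1]; exact dist_self _
            rw [h1, h2, show (ε / 2) ^ 2 + (0:ℝ) ^ 2 = (ε / 2) ^ 2 by ring,
              Real.sqrt_sq (by linarith)]
            linarith
          refine ⟨y, interior_subset (hball (Metric.mem_ball.mpr hdist)), fun h => ?_⟩
          have h0 := congrArg (fun v : EucR 2 => v 0) h
          simp only [hy0] at h0
          have : x 0 + ε / 2 = x 0 := h0
          linarith
        · exact ⟨z, interior_subset hz, hzx⟩
      obtain ⟨n, p, h0, hn, hp⟩ := hst x hx y hyS
      have hpn0 : p n ≠ p 0 := by rw [h0, hn]; exact hyne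
      have hexists : ∃ k, k < n ∧ p k ≠ p (k + 1) := by
        by_contra hall
        push_neg at hall
        apply hpn0
        have : ∀ k, k ≤ n → p k = p 0 := by
          intro k
          induction k with
          | zero => intro _; rfl
          | succ k ih =>
            intro hk
            rcases eq_or_ne (p k) (p (k + 1)) with he | he
            · rw [← he]; exact ih (by omega)
            · exact absurd he (by simpa using hall k (by omega))
        exact this n le_rfl
      classical
      set k := Nat.find hexists with hkdef
      obtain ⟨hkn, hkne⟩ := Nat.find_spec hexists
      have hpk : p k = p 0 := by
        have hconst : ∀ j, j ≤ k → p j = p 0 := by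
          intro j
          induction j with
          | zero => intro _; rfl
          | succ j ih =>
            intro hj
            have hmin := Nat.find_min hexists (show j < k by omega)
            push_neg at hmin
            have hje : p j = p (j + 1) := hmin (by omega)
            rw [← hje]
            exact ih (by omega)
        exact hconst k le_rfl
      obtain ⟨i, hi⟩ := (hp.1 k hkn).1
      have hsub := (hp.1 k hkn).2
      rw [hpk, h0] at hsub hi hkne
      have hine : x i ≠ p (k + 1) i := by
        intro h
        apply hkne
        ext j
        by_cases hj : j = i
        · subst hj; exact h
        · exact hi j hj
      fin_cases i
      · exact width_pos_h hsub hi hine hh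
      · exact width_pos_v hsub hi hine hv
  · rintro ⟨hconv, hwidth⟩ x hx y hy
    have escape : ∀ w ∈ S, ∃ n : ℕ, ∃ p : ℕ → EucR 2,
        p 0 = w ∧ p n ∈ interior S ∧ IsOrthPathIn S p n := by
      intro w hw'
      rcases hwidth w hw' with h | h
      · exact escape_h hcl hconv hw' h
      · exact escape_v hcl hconv hw' h
    obtain ⟨n1, p1, h10, h1n, hp1⟩ := escape x hx
    obtain ⟨n2, p2, h20, h2n, hp2⟩ := escape y hy
    obtain ⟨n3, p3, h30, h3n, hp3⟩ :=
      open_connected_orthconn isOpen_interior hconn.isPreconnected h1n h2n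
    have hp3' : IsOrthPathIn S p3 n3 := orthpath_mono interior_subset hp3
    obtain ⟨hr, hr0, hrend⟩ := orthpath_concat hp1 hp3' h30.symm
    have hp2rev : IsOrthPathIn S (fun k => p2 (n2 - k)) n2 := orthpath_reverse hp2
    have hj2 : (fun k => if k ≤ n1 then p1 k else p3 (k - n1)) (n1 + n3)
        = (fun k => p2 (n2 - k)) 0 := by
      rw [hrend, h3n]
      simp
    obtain ⟨hs, hs0, hsend⟩ := orthpath_concat hr hp2rev hj2
    obtain ⟨γ, m, hg0, hgm, hγ⟩ := staircase_of_orthpath hconv hs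
    refine ⟨m, γ, ?_, ?_, hγ⟩
    · have h1 : γ 0 = p1 0 := hg0.trans (hs0.trans hr0)
      rw [h1]; exact h10
    · have h1 : γ m = p2 (n2 - n2) := hgm.trans hsend
      rw [h1]
      simpa using h20

end StairAux

/-- A compact set `S ⊆ ℝ²` with connected interior satisfying `S = cl int S` is
staircase connected iff it is orthogonally convex and no point has both widths zero. -/

theorem staircaseConnected_iff_orthConvex_and_widths (S : Set (EucR 2))
    (hcl : S = closure (interior S)) (hconn : IsConnected (interior S))
    (hcomp : IsCompact S) :
    StaircaseConnected S ↔
      (OrthConvex S ∧ ∀ x ∈ S, hw S x ≠ 0 ∨ vw S x ≠ 0) := by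
  exact StairAux.main_thm S hcl hconn hcomp
end
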